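/- arXiv:1202.4622 — 6 statements merged into one kernel-verified Lean document; each statement's English description precedes it below -/
import Mathlib

section
/- The maximum of the function F(x,y) = (1-xy)^2 / (4(1+xy)(1-x)(1-y)) over the region Ω = {(x,y) : 0 ≤ x, y < 1, x + 1/y ≥ 2, 1/x + y ≥ 2} equals 1/2, and this maximum is attained at any point satisfying x + 1/y = 2 or 1/x + y = 2. -/
open Real Filter Set

/-- The function F from the paper. -/
noncomputable def Fm (x y : ℝ) : ℝ := (1 - x*y)^2 / (4*(1+x*y)*(1-x)*(1-y))

/-- The function G from the paper. -/
noncomputable def Gm (x y : ℝ) : ℝ := (x + y + 1)/4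

/-- Complete quotients of α : cq α 0 = α, cq α (n+1) = 1/{cq α n}. -/
noncomputable def cq (α : ℝ) : ℕ → ℝ
  | 0 => α
  | n+1 => (Int.fract (cq α n))⁻¹

/-- Partial quotients a_n of the continued fraction of α. -/
noncomputable def pquot (α : ℝ) (n : ℕ) : ℤ := ⌊cq α n⌋

/-- Denominators q_n of the convergents of α. -/
noncomputable def qd (α : ℝ) : ℕ → ℝ
  | 0 => 1
  | 1 => (pquot α 1 : ℝ)
  | n+2 => (pquot α (n+2) : ℝ) * qd α (n+1) + qd α n

/-- Numerators p_n of the convergents of α. -/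
noncomputable def pnum (α : ℝ) : ℕ → ℝ
  | 0 => (pquot α 0 : ℝ)
  | 1 => (pquot α 1 : ℝ) * (pquot α 0 : ℝ) + 1
  | n+2 => (pquot α (n+2) : ℝ) * pnum α (n+1) + pnum α n

/-- ξ_n = |q_n α - p_n|. -/
noncomputable def xi (α : ℝ) (n : ℕ) : ℝ := |qd α n * α - pnum α n|

/-- α*_n = [0; a_n, ..., a_1] = q_{n-1}/q_n. -/
noncomputable def astar (α : ℝ) (n : ℕ) : ℝ := qd α (n-1) / qd α n

/-- Distance from x to the nearest integer. -/
noncomputable def nidist (x : ℝ) : ℝ := |x - round x|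

/-- The ν-th convergent denominator satisfies the Legendre condition. -/
noncomputable def LegendreDen (α : ℝ) (ν : ℕ) : Prop :=
  |α - pnum α ν / qd α ν| < 1/(2 * (qd α ν)^2)

/-- ψ_α(t) = min_{1 ≤ x ≤ t} ‖xα‖. -/
noncomputable def psif (α : ℝ) (t : ℝ) : ℝ :=
  sInf {d : ℝ | ∃ x : ℤ, 1 ≤ x ∧ (x:ℝ) ≤ t ∧ d = nidist (x*α)}

/-- The region Ω (with the conventions x+y⁻¹ ≥ 2 interpreted as trivially true when y = 0,
and x⁻¹+y ≥ 2 trivially true when x = 0). -/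
def Omeg : Set (ℝ × ℝ) :=
  {p | 0 ≤ p.1 ∧ p.1 < 1 ∧ 0 ≤ p.2 ∧ p.2 < 1 ∧
    (p.2 = 0 ∨ 2 ≤ p.1 + p.2⁻¹) ∧ (p.1 = 0 ∨ 2 ≤ p.1⁻¹ + p.2)}


lemma omeg_ineq {x y : ℝ} (h : (x, y) ∈ Omeg) :
    2*x ≤ 1 + x*y ∧ 2*y ≤ 1 + x*y := by
  obtain ⟨hx0, hx1, hy0, hy1, h1, h2⟩ := h
  simp only at hx0 hx1 hy0 hy1 h1 h2
  constructor
  · rcases h2 with h2 | h2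
    · nlinarith
    · rcases eq_or_lt_of_le hx0 with h | h
      · nlinarith
      · have hinv : x⁻¹ * x = 1 := inv_mul_cancel₀ h.ne'
        nlinarith [mul_le_mul_of_nonneg_right h2 h.le]
  · rcases h1 with h1 | h1
    · nlinarith
    · rcases eq_or_lt_of_le hy0 with h | h
      · nlinarith
      · have hinv : y⁻¹ * y = 1 := inv_mul_cancel₀ h.ne'
        nlinarith [mul_le_mul_of_nonneg_right h1 h.le]

lemma fm_le {x y : ℝ} (h : (x, y) ∈ Omeg) : Fm x y ≤ 1/2 := by
  obtain ⟨h2, h1⟩ := omeg_ineq h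
  obtain ⟨hx0, hx1, hy0, hy1, -, -⟩ := h
  simp only at hx0 hx1 hy0 hy1
  have hd : 0 < 4*(1+x*y)*(1-x)*(1-y) :=
    mul_pos (mul_pos (by nlinarith [mul_nonneg hx0 hy0] : (0:ℝ) < 4*(1+x*y))
      (by linarith)) (by linarith)
  rw [Fm, div_le_iff₀ hd]
  nlinarith [mul_nonneg (by linarith : (0:ℝ) ≤ 1 + x*y - 2*x)
    (by linarith : (0:ℝ) ≤ 1 + x*y - 2*y)]

theorem stmt0 :
    IsGreatest ((fun p : ℝ × ℝ => Fm p.1 p.2) '' Omeg) (1/2) ∧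
    ∀ p ∈ Omeg, (p.1 + p.2⁻¹ = 2 ∨ p.1⁻¹ + p.2 = 2) → Fm p.1 p.2 = 1/2 := by
  have hmem : ((0:ℝ), (1/2:ℝ)) ∈ Omeg := by
    refine ⟨by norm_num, by norm_num, by norm_num, by norm_num, Or.inr (by norm_num), Or.inl rfl⟩
  constructor
  · constructor
    · exact ⟨((0:ℝ), (1/2:ℝ)), hmem, by norm_num [Fm]⟩
    · rintro v ⟨⟨x, y⟩, hp, rfl⟩
      exact fm_le hp
  · rintro ⟨x, y⟩ hp hb
    obtain ⟨h2, h1⟩ := omeg_ineq hp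
    obtain ⟨hx0, hx1, hy0, hy1, -, -⟩ := hp
    simp only at hx0 hx1 hy0 hy1 hb
    have key : 1 + x*y - 2*x = 0 ∨ 1 + x*y - 2*y = 0 := by
      rcases hb with hb | hb
      · right
        have hy : (0:ℝ) < y := by
          rcases eq_or_lt_of_le hy0 with h | h
          · exfalso; rw [← h] at hb; simp at hb; linarith
          · exact h
        have hinv : y⁻¹ * y = 1 := inv_mul_cancel₀ hy.ne'
        have := congrArg (· * y) hb
        simp only [add_mul] at this
        nlinarith
      · left
        have hx : (0:ℝ) < x := by
          rcases eq_or_lt_of_le hx0 with h | h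
          · exfalso; rw [← h] at hb; simp at hb; linarith
          · exact h
        have hinv : x⁻¹ * x = 1 := inv_mul_cancel₀ hx.ne'
        have := congrArg (· * x) hb
        simp only [add_mul] at this
        nlinarith
    have hd : (0:ℝ) < 4*(1+x*y)*(1-x)*(1-y) :=
      mul_pos (mul_pos (by nlinarith [mul_nonneg hx0 hy0] : (0:ℝ) < 4*(1+x*y))
        (by linarith)) (by linarith)
    rw [Fm, div_eq_div_iff hd.ne' two_ne_zero]
    rcases key with k | k <;> nlinarith
end

section
/- The minimum of the function F(x,y) = (1-xy)^2 / (4(1+xy)(1-x)(1-y)) over the region Ω = {(x,y) : 0 ≤ x, y < 1, x + 1/y ≥ 2, 1/x + y ≥ 2} equals 1/4, attained at (x,y) = (0,0). -/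
open Real Filter Set

theorem stmt1 :
    IsLeast ((fun p : ℝ × ℝ => Fm p.1 p.2) '' Omeg) (1/4) ∧
    ((0:ℝ), (0:ℝ)) ∈ Omeg ∧ Fm 0 0 = 1/4 := by
  have hmem : ((0:ℝ), (0:ℝ)) ∈ Omeg := by
    refine ⟨le_refl 0, by norm_num, le_refl 0, by norm_num, Or.inl rfl, Or.inl rfl⟩
  have hF00 : Fm 0 0 = 1/4 := by norm_num [Fm]
  refine ⟨⟨⟨((0:ℝ),(0:ℝ)), hmem, hF00⟩, ?_⟩, hmem, hF00⟩
  rintro z ⟨⟨x, y⟩, ⟨hx0, hx1, hy0, hy1, hc1, hc2⟩, rfl⟩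
  simp only at hx0 hx1 hy0 hy1 hc1 hc2
  simp only [Fm]
  have hxy : 0 ≤ x * y := mul_nonneg hx0 hy0
  have hpos : 0 < 4 * (1 + x*y) * (1-x) * (1-y) := by
    have : (0:ℝ) < 1 + x*y := by linarith
    have h1 : (0:ℝ) < 1 - x := by linarith
    have h2 : (0:ℝ) < 1 - y := by linarith
    positivity
  rw [le_div_iff₀ hpos]
  -- key inequalities from the constraints
  have k1 : 2*y ≤ 1 + x*y := by
    rcases hc1 with h | h
    · simp only [h]; linarith
    · rcases eq_or_lt_of_le hy0 with h0 | h0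
      · rw [← h0] at h; simp at h; linarith
      · have hy : y ≠ 0 := ne_of_gt h0
        have := mul_le_mul_of_nonneg_right h (le_of_lt h0)
        have e : (x + y⁻¹) * y = x*y + 1 := by field_simp
        rw [e] at this; linarith
  have k2 : 2*x ≤ 1 + x*y := by
    rcases hc2 with h | h
    · simp only [h]; linarith
    · rcases eq_or_lt_of_le hx0 with h0 | h0
      · rw [← h0] at h; simp at h; linarith
      · have hx : x ≠ 0 := ne_of_gt h0
        have := mul_le_mul_of_nonneg_right h (le_of_lt h0)
        have e : (x⁻¹ + y) * x = 1 + y*x := by field_simp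
        rw [e] at this; linarith
  nlinarith [mul_le_mul_of_nonneg_right k1 hx0, mul_le_mul_of_nonneg_right k2 hy0]
end

section
/- Let α be irrational with a_{ν+1} = 1, and define d_{1,ν}² = (q_{ν+1} - q_{ν-1})/(ξ_{ν-1} - ξ_{ν+1}) and M_{1,ν} = (1/4)(d_{1,ν} ξ_{ν-1} + q_{ν-1}/d_{1,ν})². Then M_{1,ν} = G(α*_ν, α_{ν+2}⁻¹) where G(x,y) = (x+y+1)/4. -/
open Real Filter Set

/-- e_n = q_n α - p_n (signed version of ξ_n). -/
noncomputable def emx (α : ℝ) (n : ℕ) : ℝ := qd α n * α - pnum α n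

lemma cq_irr (α : ℝ) (hα : Irrational α) : ∀ n, Irrational (cq α n)
  | 0 => hα
  | n+1 => by
    have h := cq_irr α hα n
    have hf : Irrational (Int.fract (cq α n)) := by
      rw [Int.fract]; exact h.sub_intCast _
    exact hf.inv

lemma fract_cq_pos (α : ℝ) (hα : Irrational α) (n : ℕ) : 0 < Int.fract (cq α n) := by
  refine lt_of_le_of_ne (Int.fract_nonneg _) (Ne.symm ?_)
  have hf : Irrational (Int.fract (cq α n)) := by
    rw [Int.fract]; exact (cq_irr α hα n).sub_intCast _
  exact hf.ne_zero

lemma cq_gt_one (α : ℝ) (hα : Irrational α) (n : ℕ) : 1 < cq α (n+1) := by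
  show 1 < (Int.fract (cq α n))⁻¹
  exact (one_lt_inv₀ (fract_cq_pos α hα n)).mpr (Int.fract_lt_one _)

lemma cq_inv_eq (α : ℝ) (n : ℕ) : (cq α (n+1))⁻¹ = Int.fract (cq α n) := by
  show ((Int.fract (cq α n))⁻¹)⁻¹ = _
  rw [inv_inv]

lemma cq_succ (α : ℝ) (n : ℕ) : cq α n = (pquot α n : ℝ) + (cq α (n+1))⁻¹ := by
  rw [cq_inv_eq, pquot, Int.fract]; ring

lemma pquot_ge_one (α : ℝ) (hα : Irrational α) (n : ℕ) : 1 ≤ pquot α (n+1) :=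
  Int.le_floor.mpr (by exact_mod_cast (cq_gt_one α hα n).le)

lemma qd_pos (α : ℝ) (hα : Irrational α) : ∀ n, 0 < qd α n
  | 0 => one_pos
  | 1 => by
    show (0:ℝ) < (pquot α 1 : ℝ)
    exact_mod_cast lt_of_lt_of_le one_pos (pquot_ge_one α hα 0)
  | n+2 => by
    show (0:ℝ) < (pquot α (n+2) : ℝ) * qd α (n+1) + qd α n
    have h1 := qd_pos α hα (n+1)
    have h2 := qd_pos α hα n
    have h3 : (1:ℝ) ≤ (pquot α (n+2) : ℝ) := by exact_mod_cast pquot_ge_one α hα (n+1)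
    nlinarith

lemma em_zero (α : ℝ) : emx α 0 = (cq α 1)⁻¹ := by
  rw [cq_inv_eq, emx, qd, pnum, pquot, Int.fract]
  rw [show cq α 0 = α from rfl]
  ring

lemma em_rec (α : ℝ) (n : ℕ) :
    emx α (n+2) = (pquot α (n+2) : ℝ) * emx α (n+1) + emx α n := by
  simp only [emx, qd, pnum]; ring

lemma em_key (α : ℝ) (hα : Irrational α) : ∀ n, cq α (n+2) * emx α (n+1) = - emx α n
  | 0 => by
    have h1 : (0:ℝ) < cq α 1 := lt_trans one_pos (cq_gt_one α hα 0)
    have hf : 0 < Int.fract α := fract_cq_pos α hα 0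
    have k1 : cq α 1 * (α - (pquot α 0 : ℝ)) = 1 := by
      show (Int.fract (cq α 0))⁻¹ * (α - (⌊cq α 0⌋ : ℝ)) = 1
      show (Int.fract α)⁻¹ * (α - (⌊α⌋ : ℝ)) = 1
      rw [show α - (⌊α⌋:ℝ) = Int.fract α from rfl]
      exact inv_mul_cancel₀ hf.ne'
    have k2 : cq α 2 * (cq α 1 - (pquot α 1 : ℝ)) = 1 := by
      show (Int.fract (cq α 1))⁻¹ * (cq α 1 - (⌊cq α 1⌋ : ℝ)) = 1
      rw [show cq α 1 - (⌊cq α 1⌋:ℝ) = Int.fract (cq α 1) from rfl]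
      exact inv_mul_cancel₀ (fract_cq_pos α hα 1).ne'
    have hem1 : emx α 1 = (pquot α 1:ℝ) * α - ((pquot α 1:ℝ)*(pquot α 0:ℝ)+1) := by
      simp [emx, qd, pnum]
    have G' : cq α 1 * (cq α 2 * emx α 1) = -1 := by
      rw [hem1]
      linear_combination ((pquot α 1:ℝ) * cq α 2) * k1 - k2
    have G'' : cq α 1 * (- emx α 0) = -1 := by
      rw [em_zero]
      field_simp
    exact mul_left_cancel₀ h1.ne' (G'.trans G''.symm)
  | n+1 => by
    have ih := em_key α hα n
    have hc : (0:ℝ) < cq α (n+3) := lt_trans one_pos (cq_gt_one α hα (n+2))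
    have hs : cq α (n+2) = (pquot α (n+2):ℝ) + (cq α (n+3))⁻¹ := cq_succ α (n+2)
    have hen : emx α n = - (cq α (n+2) * emx α (n+1)) := by linarith [ih]
    rw [em_rec, hen, hs]
    field_simp
    ring

lemma em_sign (α : ℝ) (hα : Irrational α) : ∀ n, 0 < (-1:ℝ)^n * emx α n
  | 0 => by
    rw [em_zero, pow_zero, one_mul]
    exact inv_pos.mpr (lt_trans one_pos (cq_gt_one α hα 0))
  | n+1 => by
    have ih := em_sign α hα n
    have key := em_key α hα n
    have hc : (0:ℝ) < cq α (n+2) := lt_trans one_pos (cq_gt_one α hα (n+1))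
    have he' : emx α (n+1) = - emx α n / cq α (n+2) := by
      rw [eq_div_iff hc.ne']; linarith [key]
    rw [pow_succ, he',
      show (-1:ℝ)^n * -1 * (- emx α n / cq α (n+2)) = ((-1:ℝ)^n * emx α n) / cq α (n+2) by ring]
    exact div_pos ih hc

lemma xi_eq (α : ℝ) (hα : Irrational α) (n : ℕ) : xi α n = (-1:ℝ)^n * emx α n := by
  have h := em_sign α hα n
  rw [xi, show qd α n * α - pnum α n = emx α n from rfl]
  rcases Nat.even_or_odd n with he | ho
  · rw [he.neg_one_pow] at h ⊢
    rw [one_mul] at h ⊢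
    exact abs_of_pos h
  · rw [ho.neg_one_pow] at h ⊢
    rw [neg_one_mul] at h ⊢
    rw [abs_of_neg (by linarith)]

lemma det_eq (α : ℝ) : ∀ n, pnum α (n+1) * qd α n - pnum α n * qd α (n+1) = (-1:ℝ)^n
  | 0 => by simp [pnum, qd]; ring
  | n+1 => by
    have ih := det_eq α n
    show pnum α (n+2) * qd α (n+1) - pnum α (n+1) * qd α (n+2) = _
    rw [show pnum α (n+2) = (pquot α (n+2):ℝ) * pnum α (n+1) + pnum α n from rfl,
        show qd α (n+2) = (pquot α (n+2):ℝ) * qd α (n+1) + qd α n from rfl,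
        pow_succ]
    linear_combination (-1:ℝ) * ih

lemma qe_eq (α : ℝ) (n : ℕ) :
    qd α (n+1) * emx α n - qd α n * emx α (n+1) = (-1:ℝ)^n := by
  simp only [emx]
  linear_combination det_eq α n

theorem stmt6 (α : ℝ) (hα : Irrational α) (ν : ℕ) (hν : 1 ≤ ν)
    (ha : pquot α (ν+1) = 1)
    (d1 : ℝ) (hd1 : d1 = Real.sqrt ((qd α (ν+1) - qd α (ν-1)) / (xi α (ν-1) - xi α (ν+1)))) :
    (1/4) * (d1 * xi α (ν-1) + qd α (ν-1) / d1)^2 = Gm (astar α ν) (cq α (ν+2))⁻¹ := by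
  obtain ⟨k, rfl⟩ : ∃ k, ν = k + 1 := ⟨ν - 1, (Nat.succ_pred_eq_of_pos hν).symm⟩
  simp only [Nat.add_sub_cancel] at hd1 ⊢
  rw [astar]
  simp only [Nat.add_sub_cancel]
  set A := qd α (k+1) with hAdef
  set B := qd α k with hBdef
  have hA : 0 < A := qd_pos α hα (k+1)
  have hB : 0 < B := qd_pos α hα k
  set β := cq α (k+2) with hβdef
  set x := cq α (k+1+2) with hxdef
  have hβ1 : (1:ℝ) < β := cq_gt_one α hα (k+1)
  have hx1 : (1:ℝ) < x := cq_gt_one α hα (k+2)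
  have ha' : (pquot α (k+2) : ℝ) = 1 := by exact_mod_cast ha
  have hβx : β = 1 + x⁻¹ := by
    have := cq_succ α (k+2)
    rw [ha'] at this
    exact this
  -- sign bookkeeping
  set ε := ((-1:ℝ))^k with hεdef
  have hk1 : ((-1:ℝ))^(k+1) = -ε := by rw [pow_succ]; ring
  have hk2 : ((-1:ℝ))^(k+2) = ε := by rw [pow_succ, pow_succ]; ring
  -- ξ identities
  have hxik : xi α k = ε * emx α k := xi_eq α hα k
  have hxik1 : xi α (k+1) = -ε * emx α (k+1) := by rw [xi_eq α hα (k+1), hk1]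
  have hxik2 : xi α (k+2) = ε * emx α (k+2) := by rw [xi_eq α hα (k+2), hk2]
  set X := xi α (k+1) with hXdef
  have hXpos : 0 < X := by
    rw [hxik1]
    have := em_sign α hα (k+1)
    rw [hk1] at this
    exact this
  -- numerator of d1^2 equals A
  have hnum : qd α (k+1+1) - B = A := by
    rw [show qd α (k+2) = (pquot α (k+2):ℝ) * qd α (k+1) + qd α k from rfl, ha']
    ring
  -- denominator of d1^2 equals X
  have hrec : emx α (k+2) = emx α (k+1) + emx α k := by
    rw [em_rec α k, ha']; ring
  have hden : xi α k - xi α (k+1+1) = X := by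
    rw [hxik2, hxik, hrec, hxik1]; ring
  rw [hnum, hden] at hd1
  have hd1pos : 0 < d1 := by
    rw [hd1]
    exact Real.sqrt_pos.mpr (div_pos hA hXpos)
  have hd1sq : d1^2 = A / X := by
    rw [hd1, Real.sq_sqrt (div_pos hA hXpos).le]
  -- ξ_{ν-1} = β X
  have hkey := em_key α hα k
  have hxik' : xi α k = β * X := by
    rw [hxik, hxik1]
    have : emx α k = -(β * emx α (k+1)) := by linarith [hkey]
    rw [this]; ring
  -- (Aβ + B) X = 1
  have hqe := qe_eq α k
  have hrel : (A * β + B) * X = 1 := by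
    have hek : emx α k = -(β * emx α (k+1)) := by linarith [hkey]
    rw [hek] at hqe
    have hε2 : ε^2 = 1 := by
      rw [hεdef, ← pow_mul, mul_comm, pow_mul]; norm_num
    rw [hxik1]
    rw [← hεdef] at hqe
    linear_combination ε * hqe + hε2
  -- final computation
  have hβ0 : (0:ℝ) < β := lt_trans one_pos hβ1
  have hABβ : (0:ℝ) < A * β + B := by positivity
  have hXval : X = (A * β + B)⁻¹ := by
    field_simp
    linarith [hrel]
  rw [hxik', Gm]
  have expand : (d1 * (β * X) + B / d1)^2
      = d1^2 * (β * X)^2 + 2 * (β * X) * B + B^2 / d1^2 := by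
    field_simp
    ring
  rw [expand, hd1sq, hXval]
  have hx0 : x ≠ 0 := by linarith
  rw [hβx]
  field_simp
  ring
end

section
/- Let α be irrational with a_{ν+1} = 1 and let d_{1,ν}² = (q_{ν+1} - q_{ν-1})/(ξ_{ν-1} - ξ_{ν+1}). Then d_{1,ν}² · ξ_{ν+1}/q_{ν+1} ≤ 1 ≤ d_{1,ν}² · ξ_{ν-1}/q_{ν-1}. -/
open Real Filter Set

namespace Stmt8Aux

@[simp] lemma cq_zero (α : ℝ) : cq α 0 = α := rfl

lemma cq_succ (α : ℝ) (n : ℕ) : cq α (n+1) = (Int.fract (cq α n))⁻¹ := rfl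

noncomputable def S (α : ℝ) (n : ℕ) : ℝ := ∏ k ∈ Finset.range (n+1), (cq α (k+1))⁻¹

lemma cq_irr {α : ℝ} (hα : Irrational α) : ∀ n, Irrational (cq α n)
  | 0 => hα
  | n+1 => by
      have h := cq_irr hα n
      have : Irrational (Int.fract (cq α n)) := by
        unfold Int.fract; exact Irrational.sub_intCast h ⌊cq α n⌋
      rw [cq_succ]; exact this.inv

lemma fract_cq_pos {α : ℝ} (hα : Irrational α) (n : ℕ) : 0 < Int.fract (cq α n) := by
  refine Int.fract_pos.mpr ?_
  exact fun h => (cq_irr hα n).ne_int ⌊cq α n⌋ h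

lemma cq_gt_one {α : ℝ} (hα : Irrational α) (n : ℕ) : 1 < cq α (n+1) := by
  have h1 := fract_cq_pos hα n
  have h2 := Int.fract_lt_one (cq α n)
  rw [cq]
  exact (one_lt_inv_iff₀).mpr ⟨h1, h2⟩

lemma cq_pos {α : ℝ} (hα : Irrational α) (n : ℕ) : 0 < cq α (n+1) :=
  lt_trans one_pos (cq_gt_one hα n)

lemma pquot_ge_one {α : ℝ} (hα : Irrational α) (n : ℕ) : 1 ≤ pquot α (n+1) := by
  have := cq_gt_one hα n
  exact Int.le_floor.mpr (by exact_mod_cast this.le)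

lemma inv_cq_eq {α : ℝ} (hα : Irrational α) (n : ℕ) :
    (cq α (n+1))⁻¹ = Int.fract (cq α n) := by
  rw [cq, inv_inv]

lemma S_succ (α : ℝ) (n : ℕ) : S α (n+1) = S α n * (cq α (n+2))⁻¹ := by
  rw [S, S, Finset.prod_range_succ]

lemma S_pos {α : ℝ} (hα : Irrational α) (n : ℕ) : 0 < S α n := by
  refine Finset.prod_pos fun k _ => ?_
  exact inv_pos.mpr (cq_pos hα k)

lemma S_rec {α : ℝ} (hα : Irrational α) (n : ℕ) :
    S α n = (pquot α (n+2) : ℝ) * S α (n+1) + S α (n+2) := by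
  have h3 : (cq α (n+3))⁻¹ = cq α (n+2) - (pquot α (n+2) : ℝ) := by
    rw [inv_cq_eq hα, Int.fract, pquot]
  have hc : cq α (n+2) ≠ 0 := ne_of_gt (cq_pos hα (n+1))
  rw [S_succ, S_succ, S_succ, h3]
  field_simp
  ring

lemma S_succ_le {α : ℝ} (hα : Irrational α) (n : ℕ) : S α (n+1) ≤ S α n := by
  rw [S_succ]
  have h1 : (cq α (n+2))⁻¹ ≤ 1 := by
    have := cq_gt_one hα (n+1)
    exact inv_le_one_of_one_le₀ this.le
  calc S α n * (cq α (n+2))⁻¹ ≤ S α n * 1 :=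
        mul_le_mul_of_nonneg_left h1 (S_pos hα n).le
    _ = S α n := mul_one _

lemma eta_eq {α : ℝ} (hα : Irrational α) : ∀ n, qd α n * α - pnum α n = (-1)^n * S α n := by
  intro n
  induction n using Nat.strong_induction_on with
  | _ n ih =>
    match n with
    | 0 =>
      have h : S α 0 = Int.fract α := by
        rw [S, Finset.prod_range_one, inv_cq_eq hα 0, cq_zero]
      rw [h]
      show (1:ℝ) * α - ((⌊cq α 0⌋ : ℤ):ℝ) = (-1:ℝ)^0 * Int.fract α
      rw [cq_zero, Int.fract]; ring
    | 1 =>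
      have h0 : (cq α 1)⁻¹ = Int.fract α := by rw [inv_cq_eq hα 0, cq_zero]
      have h1 : (cq α 2)⁻¹ = cq α 1 - (pquot α 1 : ℝ) := by
        rw [inv_cq_eq hα, Int.fract, pquot]
      have hf : Int.fract α ≠ 0 := ne_of_gt (fract_cq_pos hα 0)
      have hcq1 : cq α 1 = (Int.fract α)⁻¹ := by rw [cq_succ, cq_zero]
      have hS : S α 1 = Int.fract α * ((Int.fract α)⁻¹ - (pquot α 1 : ℝ)) := by
        rw [S, Finset.prod_range_succ, Finset.prod_range_one, h0, h1, hcq1]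
      rw [hS]
      have hfr : α - (pquot α 0 : ℝ) = Int.fract α := by
        rw [pquot, cq_zero, Int.fract]
      have : qd α 1 * α - pnum α 1 = (pquot α 1 : ℝ) * (α - (pquot α 0 : ℝ)) - 1 := by
        rw [qd, pnum]; ring
      rw [this, hfr]
      field_simp
      ring
    | n+2 =>
      have h1 := ih (n+1) (by omega)
      have h0 := ih n (by omega)
      have hrec : qd α (n+2) * α - pnum α (n+2) =
          (pquot α (n+2) : ℝ) * (qd α (n+1) * α - pnum α (n+1)) + (qd α n * α - pnum α n) := by
        show ((pquot α (n+2) : ℝ) * qd α (n+1) + qd α n) * α -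
            ((pquot α (n+2) : ℝ) * pnum α (n+1) + pnum α n) = _
        ring
      rw [hrec, h1, h0, S_rec hα n]
      ring

lemma xi_eq_S {α : ℝ} (hα : Irrational α) (n : ℕ) : xi α n = S α n := by
  rw [xi, eta_eq hα n, abs_mul, abs_pow, abs_neg, abs_one, one_pow, one_mul,
    abs_of_pos (S_pos hα n)]

lemma xi_pos {α : ℝ} (hα : Irrational α) (n : ℕ) : 0 < xi α n := by
  rw [xi_eq_S hα]; exact S_pos hα n

lemma xi_rec {α : ℝ} (hα : Irrational α) (n : ℕ) :
    xi α n = (pquot α (n+2) : ℝ) * xi α (n+1) + xi α (n+2) := by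
  rw [xi_eq_S hα, xi_eq_S hα, xi_eq_S hα]; exact S_rec hα n

lemma xi_anti {α : ℝ} (hα : Irrational α) (n : ℕ) : xi α (n+1) ≤ xi α n := by
  rw [xi_eq_S hα, xi_eq_S hα]; exact S_succ_le hα n

lemma qd_facts {α : ℝ} (hα : Irrational α) : ∀ n, 1 ≤ qd α n ∧ qd α n ≤ qd α (n+1) := by
  intro n
  induction n using Nat.strong_induction_on with
  | _ n ih =>
    match n with
    | 0 =>
      constructor
      · rw [qd]
      · rw [qd, qd]
        exact_mod_cast pquot_ge_one hα 0
    | n+1 =>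
      have h0 := ih n (by omega)
      have ha : (1 : ℝ) ≤ (pquot α (n+2) : ℝ) := by exact_mod_cast pquot_ge_one hα (n+1)
      have hq1 : 1 ≤ qd α (n+1) := le_trans h0.1 h0.2
      constructor
      · exact hq1
      · show qd α (n+1) ≤ (pquot α (n+2) : ℝ) * qd α (n+1) + qd α n
        nlinarith [h0.1]

end Stmt8Aux

theorem stmt8 (α : ℝ) (hα : Irrational α) (ν : ℕ) (hν : 1 ≤ ν)
    (ha : pquot α (ν+1) = 1) :
    ((qd α (ν+1) - qd α (ν-1)) / (xi α (ν-1) - xi α (ν+1))) * (xi α (ν+1) / qd α (ν+1)) ≤ 1 ∧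
    1 ≤ ((qd α (ν+1) - qd α (ν-1)) / (xi α (ν-1) - xi α (ν+1))) * (xi α (ν-1) / qd α (ν-1)) := by
  open Stmt8Aux in
  obtain ⟨m, rfl⟩ : ∃ m, ν = m + 1 := ⟨ν - 1, (Nat.succ_pred_eq_of_pos hν).symm⟩
  simp only [Nat.add_sub_cancel]
  have hq0 : 1 ≤ qd α m := (Stmt8Aux.qd_facts hα m).1
  have hq01 : qd α m ≤ qd α (m+1) := (Stmt8Aux.qd_facts hα m).2
  have hq12 : qd α (m+1) ≤ qd α (m+2) := (Stmt8Aux.qd_facts hα (m+1)).2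
  have hq1 : 1 ≤ qd α (m+1) := le_trans hq0 hq01
  have hq2 : 1 ≤ qd α (m+2) := le_trans hq1 hq12
  have hx0 := Stmt8Aux.xi_pos hα m
  have hx1 := Stmt8Aux.xi_pos hα (m+1)
  have hx2 := Stmt8Aux.xi_pos hα (m+2)
  have hxr : xi α m = xi α (m+1) + xi α (m+2) := by
    have := Stmt8Aux.xi_rec hα m
    rw [show m + 1 + 1 = m + 2 from rfl] at ha
    rw [ha] at this
    simpa using this
  have hqr : qd α (m+2) = qd α (m+1) + qd α m := by
    show (pquot α (m+2) : ℝ) * qd α (m+1) + qd α m = _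
    rw [show m + 1 + 1 = m + 2 from rfl] at ha
    rw [ha]; ring
  have hdiff : xi α m - xi α (m+2) = xi α (m+1) := by linarith
  have hqdiff : qd α (m+2) - qd α m = qd α (m+1) := by linarith
  rw [hdiff, hqdiff]
  have hx21 : xi α (m+2) ≤ xi α (m+1) := Stmt8Aux.xi_anti hα (m+1)
  have hx10 : xi α (m+1) ≤ xi α m := Stmt8Aux.xi_anti hα m
  constructor
  · rw [div_mul_div_comm, div_le_one (by positivity)]
    nlinarith
  · rw [div_mul_div_comm, le_div_iff₀ (by positivity)]
    nlinarith
end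

section
/- For α = (1+√5)/2 (the golden ratio) one has m(α) = 1/4 + 1/(2√5), where m(α) = limsup_{t→∞} t·μ_α(t) and μ_α is the piecewise-linear Minkowski diagonal function of α. -/
open Real Filter Set

open goldenRatio

/-! ### Auxiliary lemmas -/

section Aux

lemma my_sqrt5_gt_two : (2:ℝ) < √5 := by
  nlinarith [Real.sq_sqrt (show (0:ℝ) ≤ 5 by norm_num), Real.sqrt_nonneg 5]

lemma my_floor_gold : ⌊φ⌋ = 1 := by
  rw [Int.floor_eq_iff]
  push_cast
  refine ⟨le_of_lt one_lt_goldenRatio, ?_⟩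
  have := goldenRatio_lt_two; linarith

lemma my_fract_gold : Int.fract φ = φ - 1 := by
  rw [Int.fract, my_floor_gold]; norm_num

lemma my_cq_gold : ∀ n, cq φ n = φ := by
  intro n
  induction n with
  | zero => rfl
  | succ n ih =>
    have h : (φ - 1) * φ = 1 := by linear_combination goldenRatio_sq
    rw [cq, ih, my_fract_gold]
    exact inv_eq_of_mul_eq_one_right h

lemma my_pquot_gold (n : ℕ) : pquot φ n = 1 := by
  rw [pquot, my_cq_gold, my_floor_gold]

lemma my_qd_gold : ∀ n, qd φ n = Nat.fib (n+1) := by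
  have key : ∀ n, qd φ n = Nat.fib (n+1) ∧ qd φ (n+1) = Nat.fib (n+2) := by
    intro n
    induction n with
    | zero => constructor <;> simp [qd, my_pquot_gold]
    | succ n ih =>
      refine ⟨ih.2, ?_⟩
      rw [qd, my_pquot_gold, ih.1, ih.2]
      push_cast [Nat.fib_add_two]; ring
  exact fun n => (key n).1

lemma my_pnum_gold : ∀ n, pnum φ n = Nat.fib (n+2) := by
  have key : ∀ n, pnum φ n = Nat.fib (n+2) ∧ pnum φ (n+1) = Nat.fib (n+3) := by
    intro n
    induction n with
    | zero =>
      constructor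
      · simp [pnum, my_pquot_gold]
      · rw [pnum, my_pquot_gold, my_pquot_gold]
        norm_num [Nat.fib]
    | succ n ih =>
      refine ⟨ih.2, ?_⟩
      rw [pnum, my_pquot_gold, ih.1, ih.2]
      push_cast [Nat.fib_add_two]; ring
  exact fun n => (key n).1

lemma my_abs_psi : |ψ| = -ψ := abs_of_neg goldenConj_neg

lemma my_abs_psi_lt_one : |ψ| < 1 := by
  rw [my_abs_psi]; linarith [neg_one_lt_goldenConj]

lemma my_psi_sq_lt_half : ψ^2 < 1/2 := by
  rw [goldenConj_sq]
  have := my_sqrt5_gt_two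
  rw [goldenConj]; linarith

lemma my_abs_psi_pow_lt_half {m : ℕ} (hm : 2 ≤ m) : |ψ^m| < 1/2 := by
  rw [abs_pow]
  calc |ψ|^m ≤ |ψ|^2 := pow_le_pow_of_le_one (abs_nonneg _) my_abs_psi_lt_one.le hm
    _ = ψ^2 := sq_abs ψ
    _ < 1/2 := my_psi_sq_lt_half

lemma my_fib_mul_gold (m : ℕ) :
    (Nat.fib m : ℝ) * φ = ((Nat.fib (m+1) : ℤ) : ℝ) + (-ψ^m) := by
  push_cast
  linear_combination - fib_succ_sub_goldenRatio_mul_fib m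

lemma my_nidist_fib {m : ℕ} (hm : 2 ≤ m) :
    nidist ((Nat.fib m : ℝ) * φ) = (φ⁻¹)^m := by
  have hb := my_abs_psi_pow_lt_half hm
  have hb' := abs_lt.mp hb
  have h0 : round (-ψ^m) = 0 := by
    rw [round_eq_zero_iff]
    constructor
    · linarith [hb'.2]
    · linarith [hb'.1]
  rw [nidist, my_fib_mul_gold, round_intCast_add, h0]
  push_cast
  rw [add_zero, add_sub_cancel_left, abs_neg, abs_pow, my_abs_psi, inv_goldenRatio]

lemma my_gold_cube : φ^3 = 2*φ + 1 := by
  linear_combination (φ + 1) * goldenRatio_sq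

lemma my_two_fib_lt : ∀ m : ℕ, 2 * (Nat.fib (m+2) : ℝ) < φ^(m+2) := by
  have gold_gt : (3:ℝ)/2 < φ := by
    rw [goldenRatio]; linarith [my_sqrt5_gt_two]
  have key : ∀ m : ℕ, 2 * (Nat.fib (m+2) : ℝ) < φ^(m+2) ∧
      2 * (Nat.fib (m+3) : ℝ) < φ^(m+3) := by
    intro m
    induction m with
    | zero =>
      constructor
      · norm_num [Nat.fib, goldenRatio_sq]; linarith [one_lt_goldenRatio]
      · norm_num [Nat.fib, my_gold_cube]; linarith
    | succ m ih =>
      refine ⟨ih.2, ?_⟩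
      have h1 := ih.1
      have h2 := ih.2
      have hfib : (Nat.fib (m+4) : ℝ) = Nat.fib (m+3) + Nat.fib (m+2) := by
        push_cast [Nat.fib_add_two]; ring
      have hpow : φ^(m+4) = φ^(m+3) + φ^(m+2) := by
        calc φ^(m+4) = φ^(m+2) * φ^2 := by ring
          _ = φ^(m+2) * φ + φ^(m+2) := by rw [goldenRatio_sq]; ring
          _ = φ^(m+3) + φ^(m+2) := by ring
      rw [show m+1+3 = m+4 by omega, hfib, hpow]
      linarith
  exact fun m => (key m).1

lemma my_legendre_gold (k : ℕ) : LegendreDen φ (k+1) := by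
  rw [LegendreDen, my_qd_gold, my_pnum_gold]
  have hq : (0:ℝ) < Nat.fib (k+2) := by
    exact_mod_cast Nat.fib_pos.mpr (by omega)
  set q : ℝ := (Nat.fib (k+2) : ℝ) with hqdef
  have h1 : φ - (Nat.fib (k+3) : ℝ) / q = -(ψ^(k+2)) / q := by
    have h := fib_succ_sub_goldenRatio_mul_fib (k+2)
    rw [show k+2+1 = k+3 by omega] at h
    rw [eq_div_iff hq.ne', sub_mul, div_mul_cancel₀ _ hq.ne']
    linear_combination -h
  rw [show k+1+2 = k+3 by omega, h1, abs_div, abs_of_pos hq, abs_neg, abs_pow]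
  have habs : |ψ| = φ⁻¹ := by rw [abs_of_neg goldenConj_neg, inv_goldenRatio]
  rw [habs]
  have hφpow : (0:ℝ) < φ^(k+2) := pow_pos goldenRatio_pos _
  have h2q : 2 * q < φ^(k+2) := my_two_fib_lt k
  rw [inv_pow, div_lt_div_iff₀ hq (by positivity)]
  have hinv : (φ^(k+2))⁻¹ * φ^(k+2) = 1 := inv_mul_cancel₀ hφpow.ne'
  nlinarith [mul_lt_mul_of_pos_left (mul_lt_mul_of_pos_right h2q hq) (inv_pos.mpr hφpow)]

/-- abstract quadratic AM-GM bound -/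
lemma my_quad_bound {q q' x x' t : ℝ} (hD : 0 < q' - q) (hA : 0 < x - x') :
    t * ((q' - t)/(q' - q) * x + (t - q)/(q' - q) * x') ≤
      (q' * x - q * x')^2 / (4 * (x - x') * (q' - q)) := by
  have h1 : t * ((q' - t)/(q' - q) * x + (t - q)/(q' - q) * x')
      = (t * ((q' - t) * x + (t - q) * x')) / (q' - q) := by ring
  rw [h1, div_le_div_iff₀ hD (by positivity)]
  nlinarith [mul_nonneg hD.le (sq_nonneg (q' * x - q * x' - 2*(x - x')*t))]

/-- abstract quadratic vertex value -/
lemma my_quad_value {q q' x x' : ℝ} (hD : q' - q ≠ 0) (hA : x - x' ≠ 0) :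
    (q'*x - q*x')/(2*(x-x')) *
      ((q' - (q'*x - q*x')/(2*(x-x')))/(q' - q) * x
        + ((q'*x - q*x')/(2*(x-x')) - q)/(q' - q) * x')
      = (q' * x - q * x')^2 / (4 * (x - x') * (q' - q)) := by
  field_simp
  ring

lemma my_cancel1 (ξq M c a : ℝ) (hξ : ξq ≠ 0) :
    (ξq*M)^2/(4*(ξq*c)*a) = ξq*M^2/(4*c*a) := by
  rcases eq_or_ne c 0 with hc | hc
  · simp [hc]
  rcases eq_or_ne a 0 with ha | ha
  · simp [ha]
  field_simp

lemma my_Bclosed (x y ξq a e : ℝ) (hx : x ≠ 0) (ha : a ≠ 0) (hy1 : 1 + y ≠ 0) :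
    ξq*(x*a + (1+y)*e)^2/(4*(1+y)*a) = x^2 * (ξq*a) * (1 + (1+y)*(e/a)/x)^2/(4*(1+y)) := by
  field_simp

lemma my_uform (X x s c ξq : ℝ) (hX : X ≠ 0) (hx : x ≠ 0) (hs : s ≠ 0)
    (hξ : ξq = (X*x)⁻¹) :
    ξq * ((X - X*c)/s) = (1 - c)/(s*x) := by
  subst hξ
  field_simp

lemma my_fib_ge (n : ℕ) : (n+1 : ℝ) ≤ (Nat.fib (n+2) : ℝ) := by
  have : n + 1 ≤ Nat.fib (n+2) := by
    induction n with
    | zero => simp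
    | succ n ih =>
      have h1 : 1 ≤ Nat.fib (n+1) := Nat.fib_pos.mpr (by omega)
      have h2 : Nat.fib (n+3) = Nat.fib (n+1) + Nat.fib (n+2) := by
        rw [show n+3 = (n+1)+2 by omega, Nat.fib_add_two]
      rw [show n+1+2 = n+3 by omega, h2]
      omega
  exact_mod_cast this

lemma my_le_of_eps {a b : ℝ} (h : ∀ ε : ℝ, 0 < ε → a ≤ b + ε) : a ≤ b := by
  by_contra hc
  push_neg at hc
  have := h ((a-b)/2) (by linarith)
  linarith

end Aux
theorem stmt15 (α : ℝ) (hα : α = (1 + Real.sqrt 5)/2)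
    (Q : ℕ → ℝ) (hQmono : StrictMono Q)
    (hQmem : ∀ n, ∃ ν, Q n = qd α ν ∧ LegendreDen α ν)
    (hQall : ∀ ν, LegendreDen α ν → ∃ n, Q n = qd α ν)
    (μ : ℝ → ℝ)
    (hμ : ∀ n, ∀ t ∈ Set.Icc (Q n) (Q (n+1)),
      μ t = ((Q (n+1) - t)/(Q (n+1) - Q n)) * nidist (Q n * α)
          + ((t - Q n)/(Q (n+1) - Q n)) * nidist (Q (n+1) * α)) :
    Filter.limsup (fun t => t * μ t) Filter.atTop = 1/4 + 1/(2 * Real.sqrt 5) := by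
  classical
  have hαg : α = goldenRatio := hα
  subst hαg
  set q : ℕ → ℝ := fun n => (Nat.fib (n+2) : ℝ) with hqdef
  set ξ : ℕ → ℝ := fun n => (φ⁻¹)^(n+2) with hξdef
  -- identify Q with q
  have hmono_e : StrictMono q := by
    apply strictMono_nat_of_lt_succ
    intro n
    have h : Nat.fib (n+2) < Nat.fib (n+2+1) := Nat.fib_lt_fib_succ (by omega)
    simp only [hqdef]
    exact_mod_cast h
  have hQ : ∀ n, Q n = q n := by
    have hrange : Set.range Q = Set.range q := by
      apply Set.Subset.antisymm
      · rintro x ⟨n, rfl⟩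
        obtain ⟨ν, hsQ, _⟩ := hQmem n
        rw [hsQ, my_qd_gold]
        cases ν with
        | zero => exact ⟨0, by simp only [hqdef]; norm_num⟩
        | succ k => exact ⟨k, by simp only [hqdef]⟩
      · rintro x ⟨n, rfl⟩
        obtain ⟨m, hm⟩ := hQall (n+1) (my_legendre_gold n)
        refine ⟨m, ?_⟩
        rw [hm, my_qd_gold]
    have heq := (StrictMono.range_inj hQmono hmono_e).mp hrange
    exact fun n => congrFun heq n
  -- basic facts
  have hξpos : ∀ n, 0 < ξ n := fun n => by
    simp only [hξdef]; positivity
  have hξsucc : ∀ n, ξ (n+1) = ξ n * φ⁻¹ := fun n => by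
    simp only [hξdef]
    rw [show n+1+2 = (n+2)+1 by omega, pow_succ]
  have ha1 : ∀ n : ℕ, (1:ℝ) ≤ (Nat.fib (n+1) : ℝ) := fun n => by
    exact_mod_cast Nat.fib_pos.mpr (by omega)
  have hfib3 : ∀ n : ℕ, Nat.fib (n+3) = Nat.fib (n+1) + Nat.fib (n+2) := by
    intro n
    rw [show n+3 = (n+1)+2 by omega, Nat.fib_add_two, show n+1+1 = n+2 by omega]
  have hq' : ∀ n, q (n+1) = (Nat.fib (n+1) : ℝ) + q n := by
    intro n
    simp only [hqdef]
    rw [show n+1+2 = n+3 by omega, hfib3]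
    push_cast; ring
  have hb : ∀ n, q n = φ * (Nat.fib (n+1):ℝ) + ψ^(n+1) := fun n => by
    simp only [hqdef]
    have h := fib_succ_sub_goldenRatio_mul_fib (n+1)
    rw [show n+1+1 = n+2 by omega] at h
    linear_combination h
  have hD : ∀ n, 0 < q (n+1) - q n := fun n => by
    rw [hq' n]; linarith [ha1 n]
  have hA : ∀ n, 0 < ξ n - ξ (n+1) := fun n => by
    rw [hξsucc n]
    have hlt : φ⁻¹ < 1 := inv_lt_one_of_one_lt₀ one_lt_goldenRatio
    nlinarith [hξpos n]
  have hψ1 : (0:ℝ) < 1 + ψ := by linarith [neg_one_lt_goldenConj]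
  -- μ formula
  have hμ' : ∀ n, ∀ t ∈ Set.Icc (q n) (q (n+1)),
      μ t = (q (n+1) - t)/(q (n+1) - q n) * ξ n + (t - q n)/(q (n+1) - q n) * ξ (n+1) := by
    intro n t ht
    have ht' : t ∈ Set.Icc (Q n) (Q (n+1)) := by rw [hQ n, hQ (n+1)]; exact ht
    have heq := hμ n t ht'
    rw [hQ n, hQ (n+1)] at heq
    rw [heq]
    have h1 : nidist (q n * φ) = ξ n := by
      simp only [hqdef, hξdef]; exact my_nidist_fib (by omega)
    have h2 : nidist (q (n+1) * φ) = ξ (n+1) := by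
      simp only [hqdef, hξdef]; exact my_nidist_fib (by omega)
    rw [h1, h2]
  set T : ℕ → ℝ := fun n => (q (n+1) * ξ n - q n * ξ (n+1))/(2*(ξ n - ξ (n+1))) with hTdef
  set B : ℕ → ℝ := fun n => (q (n+1) * ξ n - q n * ξ (n+1))^2
      / (4 * (ξ n - ξ (n+1)) * (q (n+1) - q n)) with hBdef
  -- membership of the vertex
  have hNsub1 : ∀ n, (q (n+1) * ξ n - q n * ξ (n+1)) - q n * (2*(ξ n - ξ (n+1)))
      = ξ n * ((1+ψ)*((Nat.fib (n+1):ℝ) - ψ^(n+1))) := by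
    intro n
    rw [hξsucc n, hq' n, hb n, inv_goldenRatio]
    linear_combination (-(ξ n * (Nat.fib (n+1):ℝ))) * goldenRatio_add_goldenConj
      + (-(ξ n * (Nat.fib (n+1):ℝ))) * goldenRatio_mul_goldenConj
  have hea : ∀ n : ℕ, ψ^(n+1) ≤ (Nat.fib (n+1):ℝ) := fun n => by
    have h1 : ψ^(n+1) ≤ |ψ^(n+1)| := le_abs_self _
    have h2 : |ψ^(n+1)| ≤ 1 := by
      rw [abs_pow]; exact pow_le_one₀ (abs_nonneg _) my_abs_psi_lt_one.le
    linarith [ha1 n]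
  have hmem_left : ∀ n, q n ≤ T n := by
    intro n
    simp only [hTdef]
    rw [le_div_iff₀ (by linarith [hA n])]
    have h := hNsub1 n
    have hpos : 0 ≤ ξ n * ((1+ψ)*((Nat.fib (n+1):ℝ) - ψ^(n+1))) :=
      mul_nonneg (hξpos n).le (mul_nonneg hψ1.le (by linarith [hea n]))
    linarith
  have hNsub2 : ∀ n, q (n+1) * (2*(ξ n - ξ (n+1))) - (q (n+1) * ξ n - q n * ξ (n+1))
      = ξ n * ((2+3*ψ)*(Nat.fib (n+1):ℝ) + (1+ψ)*(q n - (Nat.fib (n+1):ℝ))) := by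
    intro n
    rw [hξsucc n, hq' n, inv_goldenRatio]
    ring
  have h23 : (0:ℝ) ≤ 2 + 3*ψ := by
    rw [goldenConj]
    nlinarith [Real.sq_sqrt (show (0:ℝ) ≤ 5 by norm_num), Real.sqrt_nonneg 5]
  have hba : ∀ n : ℕ, (Nat.fib (n+1):ℝ) ≤ q n := fun n => by
    simp only [hqdef]
    exact_mod_cast Nat.fib_mono (by omega : n+1 ≤ n+2)
  have hmem_right : ∀ n, T n ≤ q (n+1) := by
    intro n
    simp only [hTdef]
    rw [div_le_iff₀ (by linarith [hA n])]
    have h := hNsub2 n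
    have hpos : 0 ≤ ξ n * ((2+3*ψ)*(Nat.fib (n+1):ℝ) + (1+ψ)*(q n - (Nat.fib (n+1):ℝ))) :=
      mul_nonneg (hξpos n).le (add_nonneg (mul_nonneg h23 (by linarith [ha1 n]))
        (mul_nonneg hψ1.le (by linarith [hba n])))
    linarith
  -- bound and value
  have hle : ∀ n, ∀ t ∈ Set.Icc (q n) (q (n+1)), t * μ t ≤ B n := by
    intro n t ht
    rw [hμ' n t ht]
    simp only [hBdef]
    exact my_quad_bound (hD n) (hA n)
  have hval : ∀ n, T n * μ (T n) = B n := by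
    intro n
    have hmemn : T n ∈ Set.Icc (q n) (q (n+1)) := ⟨hmem_left n, hmem_right n⟩
    rw [hμ' n _ hmemn]
    simp only [hTdef, hBdef]
    exact my_quad_value (hD n).ne' (hA n).ne'
  -- the limit of B
  set r : ℝ := -ψ^2 with hrdef
  have hψr : ψ = φ * r := by
    simp only [hrdef]
    linear_combination ψ * goldenRatio_mul_goldenConj
  have habs_r : |r| < 1 := by
    simp only [hrdef]
    rw [abs_neg, abs_of_nonneg (sq_nonneg ψ)]
    linarith [my_psi_sq_lt_half]
  have hrtend : Filter.Tendsto (fun n : ℕ => r^(n+1)) Filter.atTop (nhds 0) :=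
    (tendsto_pow_atTop_nhds_zero_of_abs_lt_one habs_r).comp (tendsto_add_atTop_nat 1)
  have hsqrt5 : (0:ℝ) < Real.sqrt 5 := by positivity
  have hu : ∀ n, ξ n * (Nat.fib (n+1):ℝ) = (1 - r^(n+1))/(Real.sqrt 5 * φ) := by
    intro n
    have hX : φ^(n+1) ≠ 0 := (pow_pos goldenRatio_pos _).ne'
    have hψpow : ψ^(n+1) = φ^(n+1) * r^(n+1) := by rw [hψr, mul_pow]
    have hfib : (Nat.fib (n+1):ℝ) = (φ^(n+1) - φ^(n+1)*r^(n+1))/Real.sqrt 5 := by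
      rw [Real.coe_fib_eq, hψpow]
    have hξn : ξ n = (φ^(n+1) * φ)⁻¹ := by
      simp only [hξdef]
      rw [inv_pow, ← pow_succ]
    rw [hfib]
    exact my_uform _ _ _ _ _ hX goldenRatio_ne_zero hsqrt5.ne' hξn
  have hvtend : Filter.Tendsto (fun n : ℕ => ψ^(n+1) / (Nat.fib (n+1):ℝ))
      Filter.atTop (nhds 0) := by
    have hg : Filter.Tendsto (fun n : ℕ => |ψ|^(n+1)) Filter.atTop (nhds 0) := by
      have h := tendsto_pow_atTop_nhds_zero_of_abs_lt_one (r := |ψ|) (by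
        rw [abs_abs]; exact my_abs_psi_lt_one)
      exact h.comp (tendsto_add_atTop_nat 1)
    apply squeeze_zero_norm _ hg
    intro n
    have ha := ha1 n
    have hfa : |(Nat.fib (n+1):ℝ)| = (Nat.fib (n+1):ℝ) := abs_of_pos (by linarith)
    rw [Real.norm_eq_abs, abs_div, hfa, div_le_iff₀ (by linarith), abs_pow]
    nlinarith [pow_nonneg (abs_nonneg ψ) (n+1), pow_le_one₀ (abs_nonneg ψ) my_abs_psi_lt_one.le (n := n+1)]
  have hBform : ∀ n, B n = φ^2 * (ξ n * (Nat.fib (n+1):ℝ))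
      * (1 + (1+ψ)*(ψ^(n+1)/(Nat.fib (n+1):ℝ))/φ)^2/(4*(1+ψ)) := by
    intro n
    have ha0 : (Nat.fib (n+1):ℝ) ≠ 0 := by linarith [ha1 n]
    simp only [hBdef]
    have hNform : q (n+1) * ξ n - q n * ξ (n+1)
        = ξ n * (φ * (Nat.fib (n+1):ℝ) + (1+ψ)*ψ^(n+1)) := by
      rw [hξsucc n, hq' n, hb n, inv_goldenRatio]
      linear_combination (ξ n * (Nat.fib (n+1):ℝ)) * goldenRatio_mul_goldenConj
    have hAform : ξ n - ξ (n+1) = ξ n * (1+ψ) := by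
      rw [hξsucc n, inv_goldenRatio]; ring
    have hDform : q (n+1) - q n = (Nat.fib (n+1):ℝ) := by rw [hq' n]; ring
    rw [hNform, hAform, hDform, my_cancel1 _ _ _ _ (hξpos n).ne']
    exact my_Bclosed φ ψ (ξ n) _ _ goldenRatio_ne_zero ha0 hψ1.ne'
  have hL : φ^2 * ((1-(0:ℝ))/(Real.sqrt 5 * φ)) * (1 + (1+ψ)*0/φ)^2/(4*(1+ψ))
      = 1/4 + 1/(2*Real.sqrt 5) := by
    have h5 : Real.sqrt 5 * Real.sqrt 5 = 5 := Real.mul_self_sqrt (by norm_num)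
    have hz : φ^2 * ((1-(0:ℝ))/(Real.sqrt 5 * φ)) * (1 + (1+ψ)*0/φ)^2/(4*(1+ψ))
        = φ^2 * (Real.sqrt 5*φ)⁻¹ * (4*(1+ψ))⁻¹ := by ring
    have hinv1 : (Real.sqrt 5*φ)⁻¹ = (5-Real.sqrt 5)/10 :=
      inv_eq_of_mul_eq_one_right (by linear_combination ((4-Real.sqrt 5)/20) * h5)
    have hinv2 : (4*(1+ψ))⁻¹ = (3+Real.sqrt 5)/8 :=
      inv_eq_of_mul_eq_one_right (by linear_combination (-(1:ℝ)/4) * h5)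
    have hinv3 : (1:ℝ)/(2*Real.sqrt 5) = Real.sqrt 5/10 := by
      rw [div_eq_div_iff (by positivity) (by norm_num)]
      linear_combination (-2:ℝ)*h5
    rw [hz, hinv1, hinv2, hinv3]
    linear_combination ((13 - Real.sqrt 5*Real.sqrt 5)/320) * h5
  have hBtend : Filter.Tendsto B Filter.atTop (nhds (1/4 + 1/(2*Real.sqrt 5))) := by
    rw [← hL]
    have h1 : Filter.Tendsto (fun n => φ^2 * (ξ n * (Nat.fib (n+1):ℝ)))
        Filter.atTop (nhds (φ^2 * ((1-(0:ℝ))/(Real.sqrt 5 * φ)))) := by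
      apply Filter.Tendsto.const_mul
      simp only [hu]
      exact (tendsto_const_nhds.sub hrtend).div_const _
    have h2 : Filter.Tendsto (fun n : ℕ => 1 + (1+ψ)*(ψ^(n+1)/(Nat.fib (n+1):ℝ))/φ)
        Filter.atTop (nhds (1 + (1+ψ)*0/φ)) := by
      apply tendsto_const_nhds.add
      exact (hvtend.const_mul (1+ψ)).div_const φ
    have h3 := (h1.mul (h2.pow 2)).div_const (4*(1+ψ))
    exact Filter.Tendsto.congr (fun n => (hBform n).symm) h3
  -- q tends to infinity
  have hqtend : Filter.Tendsto q Filter.atTop Filter.atTop := by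
    have h0 : Filter.Tendsto (fun n : ℕ => (n:ℝ) + 1) Filter.atTop Filter.atTop :=
      Filter.tendsto_atTop_add_const_right _ 1 tendsto_natCast_atTop_atTop
    apply tendsto_atTop_mono _ h0
    intro n
    simp only [hqdef]
    exact my_fib_ge n
  set L : ℝ := 1/4 + 1/(2*Real.sqrt 5) with hLdef
  -- eventual upper bound
  have hub : ∀ ε : ℝ, 0 < ε → ∀ᶠ t : ℝ in Filter.atTop, t * μ t ≤ L + ε := by
    intro ε hε
    have hBev : ∀ᶠ n in Filter.atTop, B n ≤ L + ε :=
      hBtend.eventually_le_const (by linarith)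
    obtain ⟨M, hM⟩ := Filter.eventually_atTop.mp hBev
    filter_upwards [Filter.eventually_ge_atTop (q M)] with t ht
    have hex : ∃ k, t < q (M + k + 1) := by
      obtain ⟨N, hN⟩ := Filter.eventually_atTop.mp (hqtend.eventually_gt_atTop t)
      exact ⟨N, hN (M + N + 1) (by omega)⟩
    have hk1 : t < q (M + Nat.find hex + 1) := Nat.find_spec hex
    have hk0 : q (M + Nat.find hex) ≤ t := by
      rcases Nat.eq_zero_or_pos (Nat.find hex) with h0 | h0
      · rw [h0, add_zero]; exact ht
      · have hmin := Nat.find_min hex (Nat.sub_lt h0 one_pos)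
        push_neg at hmin
        rw [show M + Nat.find hex = M + (Nat.find hex - 1) + 1 by omega]
        exact hmin
    calc t * μ t ≤ B (M + Nat.find hex) := hle _ t ⟨hk0, hk1.le⟩
      _ ≤ L + ε := hM _ (by omega)
  -- frequent lower bound
  have hlb : ∀ ε : ℝ, 0 < ε → ∃ᶠ t : ℝ in Filter.atTop, L - ε ≤ t * μ t := by
    intro ε hε
    rw [Filter.frequently_atTop]
    intro c
    have h1 : ∀ᶠ n in Filter.atTop, L - ε ≤ B n :=
      hBtend.eventually_const_le (by linarith)
    have h2 : ∀ᶠ n : ℕ in Filter.atTop, c ≤ q n := hqtend.eventually_ge_atTop c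
    obtain ⟨n, hn1, hn2⟩ := (h1.and h2).exists
    exact ⟨T n, le_trans hn2 (hmem_left n), by rw [hval n]; exact hn1⟩
  have hbdd : Filter.IsBoundedUnder (· ≤ ·) Filter.atTop (fun t : ℝ => t * μ t) := by
    refine ⟨L + 1, ?_⟩
    rw [Filter.eventually_map]
    exact hub 1 one_pos
  have hcob : Filter.IsCoboundedUnder (· ≤ ·) Filter.atTop (fun t : ℝ => t * μ t) := by
    refine ⟨L - 1, fun a ha => ?_⟩
    rw [Filter.eventually_map] at ha
    obtain ⟨t, h1, h2⟩ := ((hlb 1 one_pos).and_eventually ha).exists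
    linarith
  apply le_antisymm
  · apply my_le_of_eps
    intro ε hε
    exact Filter.limsup_le_of_le hcob (hub ε hε)
  · apply my_le_of_eps
    intro ε hε
    have h := Filter.le_limsup_of_frequently_le (hlb ε hε) hbdd
    linarith
end

section
/- For every irrational α, liminf_{t→∞} t·μ_α(t) = liminf_{t→∞} t·ψ_α(t), where ψ_α(t) = min_{1 ≤ x ≤ t, x ∈ ℤ} ||xα|| and μ_α is the Minkowski diagonal function of α. -/
open Real Filter Set

namespace Aux

variable {α : ℝ}

lemma cq_irrational (hα : Irrational α) : ∀ n, Irrational (cq α n)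
  | 0 => hα
  | n+1 => by
    have h := cq_irrational hα n
    have h2 : Irrational (Int.fract (cq α n)) := by
      unfold Int.fract
      exact h.sub_intCast _
    simpa [cq] using h2.inv

lemma fract_cq_irrational (hα : Irrational α) (n : ℕ) :
    Irrational (Int.fract (cq α n)) := by
  have h := cq_irrational hα n
  unfold Int.fract
  exact h.sub_intCast _

lemma fract_cq_pos (hα : Irrational α) (n : ℕ) : 0 < Int.fract (cq α n) :=
  lt_of_le_of_ne (Int.fract_nonneg _)
    (fun h => (fract_cq_irrational hα n).ne_int 0 (by simpa using h.symm))

lemma fract_cq_lt_one (n : ℕ) : Int.fract (cq α n) < 1 := Int.fract_lt_one _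

lemma one_lt_cq (hα : Irrational α) (n : ℕ) : 1 < cq α (n+1) := by
  rw [show cq α (n+1) = (Int.fract (cq α n))⁻¹ from rfl]
  rw [one_lt_inv_iff₀]
  exact ⟨fract_cq_pos hα n, fract_cq_lt_one n⟩

lemma pquot_pos (hα : Irrational α) (n : ℕ) : 1 ≤ pquot α (n+1) := by
  rw [pquot, Int.le_floor]
  exact_mod_cast (one_lt_cq hα n).le

lemma fract_cq_eq (n : ℕ) : Int.fract (cq α n) = (cq α (n+1))⁻¹ := by
  rw [show cq α (n+1) = (Int.fract (cq α n))⁻¹ from rfl, inv_inv]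

lemma cq_eq (n : ℕ) : cq α n = (pquot α n : ℝ) + (cq α (n+1))⁻¹ := by
  have h := Int.floor_add_fract (cq α n)
  rw [← fract_cq_eq (α := α) n, pquot]
  linarith

end Aux
noncomputable def qz (α : ℝ) : ℕ → ℤ
  | 0 => 1
  | 1 => pquot α 1
  | n+2 => pquot α (n+2) * qz α (n+1) + qz α n

noncomputable def pz (α : ℝ) : ℕ → ℤ
  | 0 => pquot α 0
  | 1 => pquot α 1 * pquot α 0 + 1
  | n+2 => pquot α (n+2) * pz α (n+1) + pz α n

namespace Aux2
open Aux

variable {α : ℝ}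

lemma qd_eq : ∀ n, qd α n = (qz α n : ℝ)
  | 0 => by simp [qd, qz]
  | 1 => by simp [qd, qz]
  | n+2 => by
    rw [qd, qz, qd_eq (n+1), qd_eq n]
    push_cast
    ring

lemma pnum_eq : ∀ n, pnum α n = (pz α n : ℝ)
  | 0 => by simp [pnum, pz]
  | 1 => by simp [pnum, pz]
  | n+2 => by
    rw [pnum, pz, pnum_eq (n+1), pnum_eq n]
    push_cast
    ring

lemma qz_one_le (hα : Irrational α) : ∀ n, 1 ≤ qz α n
  | 0 => le_refl _
  | 1 => pquot_pos hα 0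
  | n+2 => by
    rw [qz]
    have h1 := qz_one_le hα (n+1)
    have h2 := qz_one_le hα n
    have h3 := pquot_pos hα (n+1)
    nlinarith

lemma qz_le_succ (hα : Irrational α) : ∀ n, qz α n ≤ qz α (n+1)
  | 0 => pquot_pos hα 0
  | n+1 => by
    rw [show (n+1)+1 = n+2 from rfl, qz]
    have h1 := qz_one_le hα (n+1)
    have h2 := qz_one_le hα n
    have h3 := pquot_pos hα (n+2-1)
    have h3' : 1 ≤ pquot α (n+2) := h3
    nlinarith

lemma qz_mono (hα : Irrational α) : Monotone (qz α) :=
  monotone_nat_of_le_succ (qz_le_succ hα)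

lemma qz_lt_succ (hα : Irrational α) (n : ℕ) : qz α (n+1) < qz α (n+2) := by
  rw [show n+2 = (n+1)+1 from rfl, qz]
  have h1 := qz_one_le hα (n+1)
  have h2 := qz_one_le hα n
  have h3' : 1 ≤ pquot α (n+2) := pquot_pos hα (n+1)
  nlinarith

lemma qz_ge (hα : Irrational α) : ∀ n : ℕ, 1 ≤ n → (n : ℤ) ≤ qz α n
  | 0 => by intro h; exact absurd h (by norm_num)
  | 1 => fun _ => pquot_pos hα 0
  | n+2 => fun _ => by
    rw [qz]
    have h1 := qz_ge hα (n+1) (by omega)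
    have h2 := qz_one_le hα n
    have h3' : 1 ≤ pquot α (n+2) := pquot_pos hα (n+1)
    push_cast
    push_cast at h1
    nlinarith [mul_le_mul_of_nonneg_right h3' (le_trans zero_le_one (qz_one_le hα (n+1)))]

lemma detz (hα : Irrational α) : ∀ n, pz α (n+1) * qz α n - pz α n * qz α (n+1) = (-1)^n
  | 0 => by simp [pz, qz]; ring
  | n+1 => by
    have ih := detz hα n
    rw [show (n+1)+1 = n+2 from rfl, pz, qz, pow_succ]
    ring_nf
    ring_nf at ih
    linarith [ih]

end Aux2
noncomputable def th (α : ℝ) (n : ℕ) : ℝ := qd α n * α - pnum α n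

namespace Aux3
open Aux Aux2

variable {α : ℝ}

lemma xi_def (n : ℕ) : xi α n = |th α n| := rfl

lemma th_rec (n : ℕ) : th α (n+2) = (pquot α (n+2) : ℝ) * th α (n+1) + th α n := by
  unfold th
  rw [qd, pnum]
  ring

lemma th_zero : th α 0 = Int.fract α := by
  unfold th
  rw [qd, pnum, pquot]
  show 1 * α - (⌊cq α 0⌋ : ℝ) = _
  rw [show cq α 0 = α from rfl, Int.fract]
  ring

lemma th_succ (hα : Irrational α) : ∀ n, th α (n+1) = -(Int.fract (cq α (n+1))) * th α n
  | 0 => by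
    have h0 : th α 0 = Int.fract α := th_zero
    have hf0 : Int.fract (cq α 0) = Int.fract α := by rw [show cq α 0 = α from rfl]
    have hpos : 0 < Int.fract α := by rw [← hf0]; exact fract_cq_pos hα 0
    have hcq1 : cq α 1 = (Int.fract α)⁻¹ := by
      rw [show cq α 1 = (Int.fract (cq α 0))⁻¹ from rfl, hf0]
    have h1 : th α 1 = (pquot α 1 : ℝ) * Int.fract α - 1 := by
      unfold th
      rw [qd, pnum]
      have hp0 : pquot α 0 = ⌊α⌋ := rfl
      have hf : Int.fract α = α - ⌊α⌋ := rfl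
      rw [hp0, hf]
      ring
    rw [h1, h0]
    have hfr : Int.fract (cq α 1) = cq α 1 - (pquot α 1 : ℝ) := by
      rw [pquot, Int.fract]
    rw [hfr, hcq1]
    field_simp
    ring
  | n+1 => by
    have ih := th_succ hα n
    have hfpos : 0 < Int.fract (cq α (n+1)) := fract_cq_pos hα (n+1)
    have hcqne : cq α (n+2) ≠ 0 := ne_of_gt (lt_trans zero_lt_one (one_lt_cq hα (n+1)))
    have hth : th α n = -(cq α (n+2)) * th α (n+1) := by
      rw [ih, fract_cq_eq (α := α) (n+1), show n+1+1 = n+2 from rfl]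
      field_simp
    rw [th_rec, hth]
    have hfr : Int.fract (cq α (n+2)) = cq α (n+2) - (pquot α (n+2) : ℝ) := by
      rw [pquot, Int.fract]
    rw [hfr]
    ring

lemma th_sign (hα : Irrational α) : ∀ n, 0 < (-1 : ℝ)^n * th α n
  | 0 => by
    rw [th_zero, pow_zero, one_mul]
    have := fract_cq_pos hα 0
    rwa [show cq α 0 = α from rfl] at this
  | n+1 => by
    rw [th_succ hα n, pow_succ]
    have h1 := th_sign hα n
    have h2 := fract_cq_pos hα (n+1)
    nlinarith

lemma th_eq_xi (hα : Irrational α) (n : ℕ) : th α n = (-1 : ℝ)^n * xi α n := by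
  have hs := th_sign hα n
  rcases Nat.even_or_odd n with he | ho
  · rw [he.neg_one_pow] at hs ⊢
    rw [one_mul] at hs ⊢
    rw [xi_def, abs_of_pos hs]
  · rw [ho.neg_one_pow] at hs ⊢
    rw [neg_one_mul] at hs ⊢
    have : th α n < 0 := by linarith
    rw [xi_def, abs_of_neg this]
    ring

lemma xi_pos (hα : Irrational α) (n : ℕ) : 0 < xi α n := by
  have hs := th_sign hα n
  rw [xi_def]
  rcases Nat.even_or_odd n with he | ho
  · rw [he.neg_one_pow, one_mul] at hs
    rw [abs_of_pos hs]; exact hs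
  · rw [ho.neg_one_pow, neg_one_mul] at hs
    rw [abs_of_neg (by linarith)]; linarith

lemma xi_succ (hα : Irrational α) (n : ℕ) :
    xi α (n+1) = Int.fract (cq α (n+1)) * xi α n := by
  rw [xi_def, xi_def, th_succ hα n, abs_mul, abs_neg,
    abs_of_pos (fract_cq_pos hα (n+1))]

lemma xi_lt (hα : Irrational α) (n : ℕ) : xi α (n+1) < xi α n := by
  rw [xi_succ hα n]
  have h1 := fract_cq_lt_one (α := α) (n+1)
  have h2 := fract_cq_pos hα (n+1)
  have h3 := xi_pos hα n
  nlinarith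

lemma xi_anti (hα : Irrational α) : StrictAnti (xi α) :=
  strictAnti_nat_of_succ_lt (xi_lt hα)

lemma det_real (hα : Irrational α) (n : ℕ) :
    pnum α (n+1) * qd α n - pnum α n * qd α (n+1) = (-1)^n := by
  rw [qd_eq, qd_eq, pnum_eq, pnum_eq]
  exact_mod_cast detz hα n

lemma key (hα : Irrational α) (n : ℕ) :
    qd α (n+1) * xi α n + qd α n * xi α (n+1) = 1 := by
  have hdet := det_real hα n
  have h1 : qd α (n+1) * th α n - qd α n * th α (n+1) = (-1)^n := by
    unfold th
    linarith [hdet]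
  rw [th_eq_xi hα n, th_eq_xi hα (n+1)] at h1
  have hne : ((-1 : ℝ)^n) ≠ 0 := pow_ne_zero _ (by norm_num)
  have h2 : (-1 : ℝ)^n * (qd α (n+1) * xi α n + qd α n * xi α (n+1)) = (-1)^n * 1 := by
    rw [pow_succ] at h1
    ring_nf
    ring_nf at h1
    linarith
  exact mul_left_cancel₀ hne h2

lemma qd_pos (hα : Irrational α) (n : ℕ) : 0 < qd α n := by
  rw [qd_eq]
  exact_mod_cast lt_of_lt_of_le zero_lt_one (qz_one_le hα n)

lemma qd_one_le (hα : Irrational α) (n : ℕ) : 1 ≤ qd α n := by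
  rw [qd_eq]; exact_mod_cast qz_one_le hα n

lemma qd_le_succ (hα : Irrational α) (n : ℕ) : qd α n ≤ qd α (n+1) := by
  rw [qd_eq, qd_eq]; exact_mod_cast qz_le_succ hα n

lemma qd_mono (hα : Irrational α) : Monotone (qd α) :=
  monotone_nat_of_le_succ (qd_le_succ hα)

lemma qd_lt_succ (hα : Irrational α) (n : ℕ) : qd α (n+1) < qd α (n+2) := by
  rw [qd_eq, qd_eq]; exact_mod_cast qz_lt_succ hα n

lemma qd_ge (hα : Irrational α) (n : ℕ) (hn : 1 ≤ n) : (n : ℝ) ≤ qd α n := by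
  rw [qd_eq]; exact_mod_cast qz_ge hα n hn

lemma qdxi_lt_one (hα : Irrational α) (n : ℕ) : qd α n * xi α n < 1 := by
  have hk := key hα n
  have h1 := qd_le_succ hα n
  have h2 := qd_pos hα n
  have h3 := xi_pos hα (n+1)
  have h4 := xi_pos hα n
  nlinarith

lemma qd_tendsto (hα : Irrational α) : Tendsto (qd α) atTop atTop := by
  exact tendsto_atTop_mono' atTop
    (by filter_upwards [eventually_ge_atTop 1] with n hn using qd_ge hα n hn)
    tendsto_natCast_atTop_atTop

end Aux3
namespace Aux4
open Aux Aux2 Aux3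

variable {α : ℝ}

lemma legendre_iff (hα : Irrational α) (n : ℕ) :
    LegendreDen α n ↔ qd α n * xi α n < 1/2 := by
  unfold LegendreDen
  have hq := qd_pos hα n
  have habs : |α - pnum α n / qd α n| = xi α n / qd α n := by
    rw [show α - pnum α n / qd α n = (qd α n * α - pnum α n) / qd α n by
      field_simp]
    rw [abs_div, abs_of_pos hq]
    rfl
  rw [habs, div_lt_div_iff₀ hq (by positivity)]
  constructor <;> intro h <;> nlinarith

lemma legendre_exists (hα : Irrational α) (N : ℕ) : ∃ n, N ≤ n ∧ LegendreDen α n := by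
  by_cases h1 : qd α (N+1) * xi α (N+1) < 1/2
  · exact ⟨N+1, by omega, (legendre_iff hα _).2 h1⟩
  · refine ⟨N+2, by omega, (legendre_iff hα _).2 ?_⟩
    push_neg at h1
    have hk := key hα (N+1)
    have hlt : qd α (N+1) < qd α (N+2) := qd_lt_succ hα N
    have hq1 : 0 < qd α (N+1) := qd_pos hα (N+1)
    have hx1 : 0 < xi α (N+1) := xi_pos hα (N+1)
    have hx2 : 0 < xi α (N+2) := xi_pos hα (N+2)
    by_contra h2
    push_neg at h2
    set a := qd α (N+1)
    set b := qd α (N+2)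
    set x := xi α (N+1)
    set y := xi α (N+2)
    have t1 : b^2 * (2*a*x - 1) ≥ 0 := by nlinarith
    have t2 : a^2 * (2*b*y - 1) ≥ 0 := by nlinarith
    nlinarith [sq_nonneg (a - b), mul_pos hq1 (lt_trans hq1 hlt)]

lemma nidist_nonneg (x : ℝ) : 0 ≤ nidist x := abs_nonneg _

lemma nidist_le (x : ℝ) (y : ℤ) : nidist x ≤ |x - y| := by
  by_cases h : y = round x
  · rw [h]; rfl
  · have h1 : (1 : ℝ) ≤ |(y : ℝ) - (round x : ℝ)| := by
      have : y - round x ≠ 0 := sub_ne_zero.2 h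
      have := Int.one_le_abs this
      exact_mod_cast this
    have h2 := abs_sub_round x
    have h3 : |(y : ℝ) - (round x : ℝ)| ≤ |x - y| + |x - round x| := by
      calc |(y : ℝ) - (round x : ℝ)| = |(x - round x) - (x - y)| := by ring_nf
        _ ≤ |x - round x| + |x - y| := abs_sub _ _
        _ = |x - y| + |x - round x| := by ring
    unfold nidist
    linarith

lemma nidist_eq_xi (hα : Irrational α) {n : ℕ} (h : xi α n < 1/2) :
    nidist (qd α n * α) = xi α n := by
  have hle : nidist (qd α n * α) ≤ xi α n := by
    have := nidist_le (qd α n * α) (pz α n)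
    rwa [show |qd α n * α - (pz α n : ℝ)| = xi α n by rw [xi, pnum_eq]] at this
  rcases eq_or_lt_of_le hle with he | hlt
  · exact he
  · exfalso
    set r := round (qd α n * α)
    have h1 : nidist (qd α n * α) = |qd α n * α - r| := rfl
    have h2 : |qd α n * α - (pz α n : ℝ)| = xi α n := by rw [xi, pnum_eq]
    have h3 : |(r : ℝ) - (pz α n : ℝ)| < 1 := by
      calc |(r : ℝ) - (pz α n : ℝ)|
          = |(qd α n * α - (pz α n : ℝ)) - (qd α n * α - r)| := by ring_nf
        _ ≤ |qd α n * α - (pz α n : ℝ)| + |qd α n * α - r| := abs_sub _ _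
        _ < 1/2 + 1/2 := by rw [h2, ← h1]; linarith
        _ = 1 := by norm_num
    have h4 : r = pz α n := by
      have h3' : |r - pz α n| < 1 := by exact_mod_cast h3
      have := Int.abs_lt_one_iff.mp h3'
      omega
    rw [h1, h4, h2] at hlt
    exact lt_irrefl _ hlt

lemma legendre_nidist (hα : Irrational α) {n : ℕ} (h : LegendreDen α n) :
    nidist (qd α n * α) = xi α n := by
  apply nidist_eq_xi hα
  have h1 := (legendre_iff hα n).1 h
  have h2 := qd_one_le hα n
  have h3 := xi_pos hα n
  nlinarith

lemma best_approx (hα : Irrational α) (ν : ℕ) (x y : ℤ) (hx1 : 1 ≤ x)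
    (hxq : (x : ℝ) < qd α (ν+1)) : xi α ν ≤ |(x : ℝ) * α - (y : ℝ)| := by
  have hdet := detz hα ν
  have hs : (-1 : ℤ)^ν * (-1 : ℤ)^ν = 1 := by
    rw [← pow_add]
    exact Even.neg_one_pow ⟨ν, by ring⟩
  set m : ℤ := (-1)^ν * (x * pz α (ν+1) - y * qz α (ν+1)) with hm
  set n : ℤ := (-1)^ν * (y * qz α ν - x * pz α ν) with hn
  have hxmn : x = m * qz α ν + n * qz α (ν+1) := by
    rw [hm, hn]
    linear_combination (-(x * (-1 : ℤ)^ν)) * hdet - x * hs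
  have hymn : y = m * pz α ν + n * pz α (ν+1) := by
    rw [hm, hn]
    linear_combination (-(y * (-1 : ℤ)^ν)) * hdet - y * hs
  -- pass to the reals
  have hreal : (x : ℝ) * α - (y : ℝ) = (m : ℝ) * th α ν + (n : ℝ) * th α (ν+1) := by
    have hx' : (x : ℝ) = (m : ℝ) * qd α ν + (n : ℝ) * qd α (ν+1) := by
      rw [qd_eq, qd_eq]; exact_mod_cast hxmn
    have hy' : (y : ℝ) = (m : ℝ) * pnum α ν + (n : ℝ) * pnum α (ν+1) := by
      rw [pnum_eq, pnum_eq]; exact_mod_cast hymn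
    rw [hx', hy']
    unfold th
    ring
  have habs1 : |(-1 : ℝ)^ν| = 1 := by
    rw [abs_pow, abs_neg, abs_one, one_pow]
  have hval : |(x : ℝ) * α - (y : ℝ)| = |(m : ℝ) * xi α ν - (n : ℝ) * xi α (ν+1)| := by
    rw [hreal, th_eq_xi hα ν, th_eq_xi hα (ν+1), pow_succ]
    rw [show (m:ℝ) * ((-1:ℝ)^ν * xi α ν) + (n:ℝ) * ((-1:ℝ)^ν * (-1) * xi α (ν+1))
        = (-1:ℝ)^ν * ((m:ℝ) * xi α ν - (n:ℝ) * xi α (ν+1)) by ring]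
    rw [abs_mul, habs1, one_mul]
  rw [hval]
  have hX := xi_pos hα ν
  have hY := xi_pos hα (ν+1)
  have hq1 : (1:ℤ) ≤ qz α ν := qz_one_le hα ν
  have hq2 : (1:ℤ) ≤ qz α (ν+1) := qz_one_le hα (ν+1)
  have hxq' : x < qz α (ν+1) := by
    have : (x:ℝ) < ((qz α (ν+1) : ℤ) : ℝ) := by rwa [← qd_eq]
    exact_mod_cast this
  by_cases hn0 : n = 0
  · -- x = m * q_ν, m ≥ 1
    rw [hn0] at hxmn
    simp only [zero_mul, add_zero] at hxmn
    have hm1 : 1 ≤ m := by nlinarith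
    have hm1' : (1:ℝ) ≤ (m:ℝ) := by exact_mod_cast hm1
    have habsm : (1:ℝ) ≤ |(m:ℝ)| := le_trans hm1' (le_abs_self _)
    rw [hn0]
    push_cast
    rw [zero_mul, sub_zero, abs_mul, abs_of_pos hX]
    nlinarith
  · rcases Int.lt_or_lt_of_ne hn0 with hneg | hpos
    · -- n ≤ -1, so m ≥ 1
      have hn1 : n ≤ -1 := by omega
      have hm1 : 1 ≤ m := by
        by_contra hm
        push_neg at hm
        have hm0 : m ≤ 0 := by omega
        nlinarith
      have hm1' : (1:ℝ) ≤ (m:ℝ) := by exact_mod_cast hm1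
      have hn1' : (n:ℝ) ≤ -1 := by exact_mod_cast hn1
      apply le_abs.2
      left
      nlinarith
    · -- n ≥ 1, so m ≤ -1
      have hn1 : 1 ≤ n := hpos
      have hm1 : m ≤ -1 := by
        by_contra hm
        push_neg at hm
        have hm0 : 0 ≤ m := by omega
        nlinarith
      have hm1' : (m:ℝ) ≤ -1 := by exact_mod_cast hm1
      have hn1' : (1:ℝ) ≤ (n:ℝ) := by exact_mod_cast hn1
      apply le_abs.2
      right
      nlinarith

end Aux4
namespace Aux5
open Aux Aux2 Aux3 Aux4

variable {α : ℝ}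

lemma psif_nonneg (t : ℝ) : 0 ≤ psif α t := by
  apply Real.sInf_nonneg
  rintro d ⟨x, -, -, rfl⟩
  exact nidist_nonneg _

lemma psif_set_bdd (t : ℝ) :
    BddBelow {d : ℝ | ∃ x : ℤ, 1 ≤ x ∧ (x:ℝ) ≤ t ∧ d = nidist (x*α)} :=
  ⟨0, by rintro d ⟨x, -, -, rfl⟩; exact nidist_nonneg _⟩

lemma psif_le {t : ℝ} (x : ℤ) (hx1 : 1 ≤ x) (hxt : (x:ℝ) ≤ t) :
    psif α t ≤ nidist (x * α) :=
  csInf_le (psif_set_bdd t) ⟨x, hx1, hxt, rfl⟩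

lemma psif_eq (hα : Irrational α) {ν : ℕ} (hν : 1 ≤ ν) {t : ℝ}
    (h1 : qd α ν ≤ t) (h2 : t < qd α (ν+1)) : psif α t = xi α ν := by
  apply le_antisymm
  · have hq1 : (1:ℤ) ≤ qz α ν := qz_one_le hα ν
    have hqt : ((qz α ν : ℤ) : ℝ) ≤ t := by rw [← qd_eq]; exact h1
    have := psif_le (α := α) (qz α ν) hq1 hqt
    calc psif α t ≤ nidist ((qz α ν : ℝ) * α) := this
      _ ≤ |(qz α ν : ℝ) * α - (pz α ν : ℝ)| := nidist_le _ _
      _ = xi α ν := by rw [xi, qd_eq, pnum_eq]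
  · apply le_csInf
    · refine ⟨nidist ((1:ℤ) * α), 1, le_refl _, ?_, rfl⟩
      push_cast
      linarith [qd_one_le hα ν]
    · rintro d ⟨x, hx1, hxt, rfl⟩
      have hxq : (x : ℝ) < qd α (ν+1) := lt_of_le_of_lt hxt h2
      have := best_approx hα ν x (round ((x:ℝ) * α)) hx1 hxq
      exact this

/-- From a point onwards, every `t` lies in some interval `[u ν, u (ν+1))`. -/
lemma exists_seg {u : ℕ → ℝ} (hdiv : Tendsto u atTop atTop) {N : ℕ} {t : ℝ}
    (h : u N ≤ t) : ∃ ν, N ≤ ν ∧ u ν ≤ t ∧ t < u (ν+1) := by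
  by_contra hcon
  push_neg at hcon
  have hall : ∀ k, u (N + k) ≤ t := by
    intro k
    induction k with
    | zero => simpa using h
    | succ k ih =>
      have := hcon (N + k) (Nat.le_add_right _ _) ih
      exact this
  obtain ⟨M, hM⟩ := (hdiv.eventually_gt_atTop t).exists_forall_of_atTop
  have := hall (M)
  have h2 := hM (N + M) (Nat.le_add_left _ _)
  linarith

/-- min of the endpoints bounds t * (linear interpolation) from below,
when the left value A dominates the right value B. -/
lemma interp_ge {s u A B t : ℝ} (hs : 0 < s) (hsu : s < u) (hB : 0 ≤ B) (hBA : B ≤ A)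
    (h1 : s ≤ t) (h2 : t ≤ u) :
    min (s*A) (u*B) ≤ t * (((u - t)/(u-s))*A + ((t-s)/(u-s))*B) := by
  have hus : 0 < u - s := by linarith
  rw [show ((u - t)/(u-s))*A + ((t-s)/(u-s))*B = ((u-t)*A + (t-s)*B)/(u-s) by ring,
    mul_div_assoc' t]
  rw [le_div_iff₀ hus]
  rcases le_total (s*A) (u*B) with hc | hc
  · rw [min_eq_left hc]
    nlinarith [mul_nonneg (mul_nonneg (sub_nonneg.2 hBA) (sub_nonneg.2 h1)) (sub_nonneg.2 h2),
      mul_nonneg (sub_nonneg.2 h1) (sub_nonneg.2 hc)]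
  · rw [min_eq_right hc]
    nlinarith [mul_nonneg (mul_nonneg (sub_nonneg.2 hBA) (sub_nonneg.2 h1)) (sub_nonneg.2 h2),
      mul_nonneg (sub_nonneg.2 h2) (sub_nonneg.2 hc)]

end Aux5
namespace Aux6
open Aux Aux2 Aux3 Aux4 Aux5

variable {α : ℝ}

lemma g_bdd (hα : Irrational α) :
    IsBoundedUnder (· ≥ ·) (atTop : Filter ℕ) (fun ν => qd α ν * xi α ν) :=
  ⟨0, eventually_map.2 (Eventually.of_forall fun ν =>
    (mul_nonneg (qd_pos hα ν).le (xi_pos hα ν).le))⟩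

lemma g_cobdd (hα : Irrational α) :
    IsCoboundedUnder (· ≥ ·) (atTop : Filter ℕ) (fun ν => qd α ν * xi α ν) :=
  IsCoboundedUnder.of_frequently_le (a := 1)
    (Frequently.of_forall fun ν => (qdxi_lt_one hα ν).le)

lemma fpsi_bdd (hα : Irrational α) :
    IsBoundedUnder (· ≥ ·) (atTop : Filter ℝ) (fun t => t * psif α t) :=
  ⟨0, eventually_map.2 (by
    filter_upwards [eventually_ge_atTop (0:ℝ)] with t ht
    exact mul_nonneg ht (psif_nonneg t))⟩

lemma fpsi_qd (hα : Irrational α) {ν : ℕ} (hν : 1 ≤ ν) :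
    qd α ν * psif α (qd α ν) = qd α ν * xi α ν := by
  obtain ⟨k, rfl⟩ : ∃ k, ν = k + 1 := ⟨ν - 1, by omega⟩
  rw [psif_eq hα hν (le_refl _) (qd_lt_succ hα k)]

lemma fpsi_cobdd (hα : Irrational α) :
    IsCoboundedUnder (· ≥ ·) (atTop : Filter ℝ) (fun t => t * psif α t) := by
  apply IsCoboundedUnder.of_frequently_le (a := 1)
  rw [frequently_atTop]
  intro b
  obtain ⟨N, hN⟩ := ((qd_tendsto hα).eventually_ge_atTop b).exists_forall_of_atTop
  refine ⟨qd α (max N 1), hN _ (le_max_left _ _), ?_⟩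
  show qd α (max N 1) * psif α (qd α (max N 1)) ≤ 1
  rw [fpsi_qd hα (le_max_right _ _)]
  exact (qdxi_lt_one hα _).le

lemma psi_liminf (hα : Irrational α) :
    liminf (fun t => t * psif α t) atTop
      = liminf (fun ν => qd α ν * xi α ν) atTop := by
  apply le_antisymm
  · -- liminf f ≤ liminf g, via the subsequence t = qd ν
    have hmap : map (qd α) atTop ≤ (atTop : Filter ℝ) := (qd_tendsto hα)
    have hco : IsCoboundedUnder (· ≥ ·) (map (qd α) atTop) (fun t => t * psif α t) := by
      apply IsCoboundedUnder.of_frequently_le (a := 1)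
      rw [frequently_map]
      apply Eventually.frequently
      filter_upwards [eventually_ge_atTop 1] with ν hν
      show qd α ν * psif α (qd α ν) ≤ 1
      rw [fpsi_qd hα hν]
      exact (qdxi_lt_one hα ν).le
    calc liminf (fun t => t * psif α t) atTop
        ≤ liminf (fun t => t * psif α t) (map (qd α) atTop) :=
          liminf_le_liminf_of_le hmap (fpsi_bdd hα) hco
      _ = liminf ((fun t => t * psif α t) ∘ (qd α)) atTop :=
          (liminf_comp _ _ _).symm
      _ = liminf (fun ν => qd α ν * xi α ν) atTop := by
          apply liminf_congr
          filter_upwards [eventually_ge_atTop 1] with ν hν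
          exact fpsi_qd hα hν
  · apply le_of_forall_lt
    intro c hc
    obtain ⟨c', hcc', hc'g⟩ := exists_between hc
    have hev : ∀ᶠ ν in (atTop : Filter ℕ), c' < qd α ν * xi α ν :=
      eventually_lt_of_lt_liminf hc'g (g_bdd hα)
    obtain ⟨N, hN⟩ := hev.exists_forall_of_atTop
    have hevf : ∀ᶠ t in (atTop : Filter ℝ), c' ≤ t * psif α t := by
      filter_upwards [eventually_ge_atTop (qd α (max N 1))] with t ht
      obtain ⟨ν, hνN, h1, h2⟩ := exists_seg (qd_tendsto hα) ht
      have hν1 : 1 ≤ ν := le_trans (le_max_right N 1) hνN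
      have hψ : psif α t = xi α ν := psif_eq hα hν1 h1 h2
      have hg : qd α ν * xi α ν ≤ t * psif α t := by
        rw [hψ]
        have hx := xi_pos hα ν
        nlinarith [qd_pos hα ν]
      exact le_trans (hN ν (le_trans (le_max_left N 1) hνN)).le hg
    exact lt_of_lt_of_le hcc' (le_liminf_of_le (fpsi_cobdd hα) hevf)

end Aux6
namespace Aux7
open Aux Aux2 Aux3 Aux4 Aux5 Aux6

variable {α : ℝ} {Q : ℕ → ℝ} {μ : ℝ → ℝ}

section QFacts

variable (hα : Irrational α) (hQmono : StrictMono Q)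
  (hQmem : ∀ n, ∃ ν, Q n = qd α ν ∧ LegendreDen α ν)

include hα hQmem in
lemma Q_one_le (n : ℕ) : 1 ≤ Q n := by
  obtain ⟨ν, hν, -⟩ := hQmem n
  rw [hν]; exact qd_one_le hα ν

include hα hQmono hQmem in
lemma Q_gap (n : ℕ) : Q n + 1 ≤ Q (n+1) := by
  obtain ⟨ν, hν, -⟩ := hQmem n
  obtain ⟨ν', hν', -⟩ := hQmem (n+1)
  have hlt : (qz α ν : ℝ) < (qz α ν' : ℝ) := by
    rw [← qd_eq, ← qd_eq, ← hν, ← hν']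
    exact hQmono (Nat.lt_succ_self n)
  have hz : qz α ν + 1 ≤ qz α ν' := by exact_mod_cast hlt
  rw [hν, hν', qd_eq, qd_eq]
  exact_mod_cast hz

include hα hQmono hQmem in
lemma Q_ge (n : ℕ) : (n : ℝ) + 1 ≤ Q n := by
  induction n with
  | zero => simpa using Q_one_le hα hQmem 0
  | succ n ih =>
    have := Q_gap hα hQmono hQmem n
    push_cast
    linarith

include hα hQmono hQmem in
lemma Q_tendsto : Tendsto Q atTop atTop := by
  apply tendsto_atTop_mono' atTop
    (Eventually.of_forall (fun n => by linarith [Q_ge hα hQmono hQmem n] :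
      ∀ n : ℕ, (n : ℝ) ≤ Q n))
  exact tendsto_natCast_atTop_atTop

include hα hQmem in
lemma Q_nidist (n : ℕ) : ∃ ν, Q n = qd α ν ∧ nidist (Q n * α) = xi α ν ∧
    qd α ν * xi α ν < 1/2 := by
  obtain ⟨ν, hν, hleg⟩ := hQmem n
  exact ⟨ν, hν, by rw [hν]; exact legendre_nidist hα hleg, (legendre_iff hα ν).1 hleg⟩

include hα hQmono hQmem in
lemma Q_h_lt_half (n : ℕ) : Q n * nidist (Q n * α) < 1/2 := by
  obtain ⟨ν, hν, hni, hval⟩ := Q_nidist hα hQmem n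
  rw [hni, hν]; exact hval

include hα hQmono hQmem in
lemma Q_nidist_anti (n : ℕ) : nidist (Q (n+1) * α) ≤ nidist (Q n * α) := by
  obtain ⟨ν, hν, hni, -⟩ := Q_nidist hα hQmem n
  obtain ⟨ν', hν', hni', -⟩ := Q_nidist hα hQmem (n+1)
  rw [hni, hni']
  have hlt : qd α ν < qd α ν' := by
    rw [← hν, ← hν']; exact hQmono (Nat.lt_succ_self n)
  have hνν' : ν < ν' := by
    by_contra hcon
    push_neg at hcon
    exact absurd (qd_mono hα hcon) (not_le.2 hlt)
  exact ((xi_anti hα).antitone hνν'.le)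

end QFacts

lemma mu_liminf (hα : Irrational α) (hQmono : StrictMono Q)
    (hQmem : ∀ n, ∃ ν, Q n = qd α ν ∧ LegendreDen α ν)
    (hμ : ∀ n, ∀ t ∈ Set.Icc (Q n) (Q (n+1)),
      μ t = ((Q (n+1) - t)/(Q (n+1) - Q n)) * nidist (Q n * α)
          + ((t - Q n)/(Q (n+1) - Q n)) * nidist (Q (n+1) * α)) :
    liminf (fun t => t * μ t) atTop = liminf (fun n => Q n * nidist (Q n * α)) atTop := by
  have hQt : Tendsto Q atTop atTop := Q_tendsto hα hQmono hQmem
  have hQ1 : ∀ n, 1 ≤ Q n := Q_one_le hα hQmem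
  -- endpoint values
  have hμQ : ∀ n, μ (Q n) = nidist (Q n * α) := by
    intro n
    have hmem : Q n ∈ Set.Icc (Q n) (Q (n+1)) :=
      ⟨le_refl _, (hQmono (Nat.lt_succ_self n)).le⟩
    have hD : Q (n+1) - Q n ≠ 0 :=
      sub_ne_zero.2 (ne_of_gt (hQmono (Nat.lt_succ_self n)))
    rw [hμ n (Q n) hmem, div_self hD, sub_self, zero_div, one_mul, zero_mul, add_zero]
  -- endpoint values of t * μ t
  have hfQ : ∀ n, Q n * μ (Q n) = Q n * nidist (Q n * α) := fun n => by rw [hμQ n]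
  -- interpolation lower bound
  have hmin : ∀ n, ∀ t ∈ Set.Icc (Q n) (Q (n+1)),
      min (Q n * nidist (Q n * α)) (Q (n+1) * nidist (Q (n+1) * α)) ≤ t * μ t := by
    intro n t ht
    rw [hμ n t ht]
    exact interp_ge (lt_of_lt_of_le zero_lt_one (hQ1 n))
      (hQmono (Nat.lt_succ_self n)) (nidist_nonneg _)
      (Q_nidist_anti hα hQmono hQmem n) ht.1 ht.2
  -- nonnegativity of h
  have hh0 : ∀ n, 0 ≤ Q n * nidist (Q n * α) := fun n =>
    mul_nonneg (le_trans zero_le_one (hQ1 n)) (nidist_nonneg _)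
  have hhb : IsBoundedUnder (· ≥ ·) (atTop : Filter ℕ) (fun n => Q n * nidist (Q n * α)) :=
    ⟨0, eventually_map.2 (Eventually.of_forall hh0)⟩
  -- lower bound for t * μ t, eventually
  have hflow : ∀ t, Q 0 ≤ t → ∃ n, Q n ≤ t ∧ t ≤ Q (n+1) ∧
      min (Q n * nidist (Q n * α)) (Q (n+1) * nidist (Q (n+1) * α)) ≤ t * μ t := by
    intro t ht
    obtain ⟨n, -, h1, h2⟩ := exists_seg hQt ht
    exact ⟨n, h1, h2.le, hmin n t ⟨h1, h2.le⟩⟩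
  have hfb : IsBoundedUnder (· ≥ ·) (atTop : Filter ℝ) (fun t => t * μ t) := by
    refine ⟨0, eventually_map.2 ?_⟩
    filter_upwards [eventually_ge_atTop (Q 0)] with t ht
    obtain ⟨n, -, -, hm⟩ := hflow t ht
    exact le_trans (le_min (hh0 n) (hh0 (n+1))) hm
  have hfc : IsCoboundedUnder (· ≥ ·) (atTop : Filter ℝ) (fun t => t * μ t) := by
    apply IsCoboundedUnder.of_frequently_le (a := 1/2)
    rw [frequently_atTop]
    intro b
    obtain ⟨N, hN⟩ := (hQt.eventually_ge_atTop b).exists_forall_of_atTop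
    refine ⟨Q N, hN _ (le_refl _), ?_⟩
    show Q N * μ (Q N) ≤ 1/2
    rw [hfQ N]
    exact (Q_h_lt_half hα hQmono hQmem N).le
  apply le_antisymm
  · have hmap : map Q atTop ≤ (atTop : Filter ℝ) := hQt
    have hco : IsCoboundedUnder (· ≥ ·) (map Q atTop) (fun t => t * μ t) := by
      apply IsCoboundedUnder.of_frequently_le (a := 1/2)
      rw [frequently_map]
      apply Eventually.frequently
      apply Eventually.of_forall
      intro n
      show Q n * μ (Q n) ≤ 1/2
      rw [hfQ n]
      exact (Q_h_lt_half hα hQmono hQmem n).le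
    calc liminf (fun t => t * μ t) atTop
        ≤ liminf (fun t => t * μ t) (map Q atTop) :=
          liminf_le_liminf_of_le hmap hfb hco
      _ = liminf ((fun t => t * μ t) ∘ Q) atTop := (liminf_comp _ _ _).symm
      _ = liminf (fun n => Q n * nidist (Q n * α)) atTop := by
          apply liminf_congr
          apply Eventually.of_forall
          intro n
          show Q n * μ (Q n) = _
          rw [hfQ n]
  · apply le_of_forall_lt
    intro c hc
    obtain ⟨c', hcc', hc'h⟩ := exists_between hc
    have hev : ∀ᶠ n in (atTop : Filter ℕ), c' < Q n * nidist (Q n * α) :=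
      eventually_lt_of_lt_liminf hc'h hhb
    obtain ⟨N, hN⟩ := hev.exists_forall_of_atTop
    have hevf : ∀ᶠ t in (atTop : Filter ℝ), c' ≤ t * μ t := by
      filter_upwards [eventually_ge_atTop (Q N)] with t ht
      obtain ⟨n, hnN, h1, h2⟩ := exists_seg hQt ht
      have hm := hmin n t ⟨h1, h2.le⟩
      have h3 := hN n hnN
      have h4 := hN (n+1) (by omega)
      calc c' ≤ min (Q n * nidist (Q n * α)) (Q (n+1) * nidist (Q (n+1) * α)) :=
            le_min h3.le h4.le
        _ ≤ t * μ t := hm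
    exact lt_of_lt_of_le hcc' (le_liminf_of_le hfc hevf)

lemma link_liminf (hα : Irrational α) (hQmono : StrictMono Q)
    (hQmem : ∀ n, ∃ ν, Q n = qd α ν ∧ LegendreDen α ν)
    (hQall : ∀ ν, LegendreDen α ν → ∃ n, Q n = qd α ν) :
    liminf (fun n => Q n * nidist (Q n * α)) atTop
      = liminf (fun ν => qd α ν * xi α ν) atTop := by
  have hQt : Tendsto Q atTop atTop := Q_tendsto hα hQmono hQmem
  have hQ1 : ∀ n, 1 ≤ Q n := Q_one_le hα hQmem
  have hh0 : ∀ n, 0 ≤ Q n * nidist (Q n * α) := fun n =>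
    mul_nonneg (le_trans zero_le_one (hQ1 n)) (nidist_nonneg _)
  have hhb : IsBoundedUnder (· ≥ ·) (atTop : Filter ℕ) (fun n => Q n * nidist (Q n * α)) :=
    ⟨0, eventually_map.2 (Eventually.of_forall hh0)⟩
  -- choose the convergent index for each n
  set ν' : ℕ → ℕ := fun n => Classical.choose (hQmem n) with hν'def
  have hν'spec : ∀ n, Q n = qd α (ν' n) ∧ LegendreDen α (ν' n) :=
    fun n => Classical.choose_spec (hQmem n)
  have hh : ∀ n, Q n * nidist (Q n * α) = qd α (ν' n) * xi α (ν' n) := by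
    intro n
    obtain ⟨h1, h2⟩ := hν'spec n
    rw [h1, legendre_nidist hα h2]
  have hν't : Tendsto ν' atTop atTop := by
    rw [tendsto_atTop]
    intro M
    filter_upwards [hQt.eventually_gt_atTop (qd α M)] with n hn
    by_contra hcon
    push_neg at hcon
    have := qd_mono hα hcon.le
    rw [← (hν'spec n).1] at this
    linarith
  apply le_antisymm
  · -- liminf h ≤ liminf g : via Legendre indices
    have hlim_le_half : liminf (fun n => Q n * nidist (Q n * α)) atTop ≤ 1/2 :=
      liminf_le_of_frequently_le
        (Frequently.of_forall fun n => (Q_h_lt_half hα hQmono hQmem n).le) hhb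
    by_contra hcon
    push_neg at hcon
    obtain ⟨c, hc1, hc2⟩ := exists_between hcon
    have hchalf : c < 1/2 := lt_of_lt_of_le hc2 hlim_le_half
    have hfreq : ∃ᶠ ν in (atTop : Filter ℕ), qd α ν * xi α ν < c :=
      frequently_lt_of_liminf_lt (g_cobdd hα) hc1
    have hfreqh : ∃ᶠ n in (atTop : Filter ℕ), Q n * nidist (Q n * α) ≤ c := by
      rw [frequently_atTop]
      intro N₀
      rw [frequently_atTop] at hfreq
      obtain ⟨ν, hν1, hν2⟩ := hfreq (max 1 (⌈Q N₀⌉₊ + 1))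
      have hleg : LegendreDen α ν := (legendre_iff hα ν).2 (lt_trans hν2 hchalf)
      obtain ⟨n, hn⟩ := hQall ν hleg
      have hqν : Q N₀ < qd α ν := by
        have h1 : (⌈Q N₀⌉₊ : ℝ) + 1 ≤ (ν : ℝ) := by
          have : ⌈Q N₀⌉₊ + 1 ≤ ν := le_trans (le_max_right _ _) hν1
          exact_mod_cast this
        have h2 : Q N₀ ≤ (⌈Q N₀⌉₊ : ℝ) := Nat.le_ceil _
        have h3 : (ν : ℝ) ≤ qd α ν := qd_ge hα ν (le_trans (le_max_left _ _) hν1)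
        linarith
      have hnN : N₀ ≤ n := by
        by_contra hcon2
        push_neg at hcon2
        have := hQmono.le_iff_le.2 hcon2.le
        rw [hn] at this
        linarith
      refine ⟨n, hnN, ?_⟩
      rw [hn, legendre_nidist hα hleg]
      exact hν2.le
    have := liminf_le_of_frequently_le hfreqh hhb
    linarith
  · -- liminf g ≤ liminf h : h is a subsequence of g
    have hco : IsCoboundedUnder (· ≥ ·) (map ν' atTop) (fun ν => qd α ν * xi α ν) := by
      apply IsCoboundedUnder.of_frequently_le (a := 1/2)
      rw [frequently_map]
      apply Frequently.of_forall
      intro n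
      show qd α (ν' n) * xi α (ν' n) ≤ 1/2
      rw [← hh n]
      exact (Q_h_lt_half hα hQmono hQmem n).le
    calc liminf (fun ν => qd α ν * xi α ν) atTop
        ≤ liminf (fun ν => qd α ν * xi α ν) (map ν' atTop) :=
          liminf_le_liminf_of_le hν't (g_bdd hα) hco
      _ = liminf ((fun ν => qd α ν * xi α ν) ∘ ν') atTop := (liminf_comp _ _ _).symm
      _ = liminf (fun n => Q n * nidist (Q n * α)) atTop := by
          apply liminf_congr
          exact Eventually.of_forall fun n => (hh n).symm

end Aux7


theorem stmt18 (α : ℝ) (hα : Irrational α)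
    (Q : ℕ → ℝ) (hQmono : StrictMono Q)
    (hQmem : ∀ n, ∃ ν, Q n = qd α ν ∧ LegendreDen α ν)
    (hQall : ∀ ν, LegendreDen α ν → ∃ n, Q n = qd α ν)
    (μ : ℝ → ℝ)
    (hμ : ∀ n, ∀ t ∈ Set.Icc (Q n) (Q (n+1)),
      μ t = ((Q (n+1) - t)/(Q (n+1) - Q n)) * nidist (Q n * α)
          + ((t - Q n)/(Q (n+1) - Q n)) * nidist (Q (n+1) * α)) :
    Filter.liminf (fun t => t * μ t) Filter.atTop
      = Filter.liminf (fun t => t * psif α t) Filter.atTop := by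
  rw [Aux7.mu_liminf hα hQmono hQmem hμ, Aux7.link_liminf hα hQmono hQmem hQall,
    Aux6.psi_liminf hα]
end
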